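/- arXiv:1907.01232 — 6 statements merged into one kernel-verified Lean document; each statement's English description precedes it below -/
import Mathlib

section
/- Let P ∈ ℤ[X] have degree d and height H, with leading coefficient a_d and complex roots α_1,...,α_d. The polynomial M(X) = a_d^{2(d-1)} ∏_{i<j} (X - (α_i - α_j)^2) has integer coefficients, and its height is bounded by c·H^{2(d-1)} for a constant c depending only on d. -/
open Polynomial

open Finset AddMonoidAlgebra

set_option maxHeartbeats 1000000
set_option synthInstance.maxHeartbeats 1000000
set_option linter.unusedVariables false
set_option linter.unreachableTactic false
set_option linter.unnecessarySeqFocus false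
set_option linter.unusedTactic false
set_option linter.unnecessarySimpa false
set_option linter.deprecated false

lemma prod_pairs_perm {M : Type*} [CommMonoid M] {d : ℕ} (g : Fin d → Fin d → M)
    (hg : ∀ i j, g i j = g j i) (σ : Equiv.Perm (Fin d)) :
    (∏ i, ∏ j ∈ Finset.Ioi i, g (σ i) (σ j)) = ∏ i, ∏ j ∈ Finset.Ioi i, g i j := by
  rw [Finset.prod_sigma', Finset.prod_sigma']
  refine Finset.prod_nbij'
    (fun x => if σ x.1 < σ x.2 then ⟨σ x.1, σ x.2⟩ else ⟨σ x.2, σ x.1⟩)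
    (fun y => if σ⁻¹ y.1 < σ⁻¹ y.2 then ⟨σ⁻¹ y.1, σ⁻¹ y.2⟩ else ⟨σ⁻¹ y.2, σ⁻¹ y.1⟩)
    ?_ ?_ ?_ ?_ ?_
  · rintro ⟨x1, x2⟩ hx
    simp only [mem_sigma, mem_univ, mem_Ioi, true_and] at hx ⊢
    split_ifs with h
    · exact h
    · exact lt_of_le_of_ne (not_lt.1 h) (fun he => hx.ne (σ.injective he).symm)
  · rintro ⟨y1, y2⟩ hy
    simp only [mem_sigma, mem_univ, mem_Ioi, true_and] at hy ⊢
    split_ifs with h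
    · exact h
    · refine lt_of_le_of_ne (not_lt.1 h) (fun he => hy.ne ?_)
      have := congrArg σ he
      simpa using this.symm
  · rintro ⟨x1, x2⟩ hx
    simp only [mem_sigma, mem_univ, mem_Ioi, true_and] at hx
    beta_reduce
    split_ifs with h h2 h2 <;> simp_all <;> first | exact absurd h2 hx.asymm | exact absurd h2 hy.asymm
  · rintro ⟨y1, y2⟩ hy
    simp only [mem_sigma, mem_univ, mem_Ioi, true_and] at hy
    beta_reduce
    split_ifs with h h2 h2 <;> simp_all <;> first | exact absurd h2 hx.asymm | exact absurd h2 hy.asymm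
  · rintro ⟨x1, x2⟩ hx
    beta_reduce
    split_ifs with h
    · rfl
    · exact hg _ _

noncomputable def FF (d : ℕ) : Polynomial (MvPolynomial (Fin d) ℤ) :=
  ∏ i : Fin d, ∏ j ∈ Finset.Ioi i,
    (X - C ((MvPolynomial.X i - MvPolynomial.X j) ^ 2))

lemma isSymmetric_coeff_FF (n : ℕ) : ((FF d).coeff n).IsSymmetric := by
  intro σ
  have h1 : MvPolynomial.rename σ ((FF d).coeff n)
      = ((FF d).map (MvPolynomial.rename (σ : Fin d → Fin d)).toRingHom).coeff n := by
    rw [Polynomial.coeff_map]; rfl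
  rw [h1]
  have h2 : (FF d).map (MvPolynomial.rename (σ : Fin d → Fin d)).toRingHom
      = ∏ i : Fin d, ∏ j ∈ Finset.Ioi i,
          (X - C ((MvPolynomial.X (σ i) - MvPolynomial.X (σ j)) ^ 2)) := by
    simp [FF, Polynomial.map_prod, Polynomial.map_sub, map_pow]
  have hgg : ∀ i j : Fin d,
      (X - C ((MvPolynomial.X i - MvPolynomial.X j) ^ 2)
        : Polynomial (MvPolynomial (Fin d) ℤ))
      = X - C ((MvPolynomial.X j - MvPolynomial.X i) ^ 2) := fun i j => by
    rw [show (MvPolynomial.X i - MvPolynomial.X j : MvPolynomial (Fin d) ℤ) ^ 2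
      = (MvPolynomial.X j - MvPolynomial.X i) ^ 2 from by ring]
  rw [h2, prod_pairs_perm _ hgg σ]
  rfl

lemma degreeOf_coeff_prod_le {ι : Type*} {σ' : Type*} (v : σ') (s : Finset ι)
    (f : ι → Polynomial (MvPolynomial σ' ℤ)) (b : ι → ℕ)
    (h : ∀ i ∈ s, ∀ n, ((f i).coeff n).degreeOf v ≤ b i) :
    ∀ n, ((∏ i ∈ s, f i).coeff n).degreeOf v ≤ ∑ i ∈ s, b i := by
  classical
  induction s using Finset.cons_induction with
  | empty =>
    intro n
    simp only [Finset.prod_empty, Polynomial.coeff_one]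
    split_ifs
    · rw [← MvPolynomial.C_1, MvPolynomial.degreeOf_C]; simp
    · simp [MvPolynomial.degreeOf_zero]
  | cons a s ha ih =>
    intro n
    rw [Finset.prod_cons, Polynomial.coeff_mul, Finset.sum_cons]
    refine le_trans (MvPolynomial.degreeOf_sum_le _ _ _) ?_
    refine Finset.sup_le fun x hx => ?_
    refine le_trans (MvPolynomial.degreeOf_mul_le _ _ _) ?_
    exact add_le_add (h a (Finset.mem_cons_self a s) x.1)
      (ih (fun i hi => h i (Finset.mem_cons_of_mem hi)) x.2)

lemma degreeOf_coeff_X_sub_C {σ' : Type*} (v : σ') (c : MvPolynomial σ' ℤ) (n : ℕ) :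
    ((X - C c : Polynomial (MvPolynomial σ' ℤ)).coeff n).degreeOf v ≤ c.degreeOf v := by
  rw [Polynomial.coeff_sub, Polynomial.coeff_X, Polynomial.coeff_C]
  split_ifs with h1 h2 h2
  · omega
  · rw [sub_zero, ← MvPolynomial.C_1, MvPolynomial.degreeOf_C]; omega
  · rw [zero_sub, MvPolynomial.degreeOf_neg]
  · simp [MvPolynomial.degreeOf_zero]

lemma degreeOf_sq_diff (v i j : Fin d) :
    ((MvPolynomial.X i - MvPolynomial.X j : MvPolynomial (Fin d) ℤ) ^ 2).degreeOf v
      ≤ if v = i ∨ v = j then 2 else 0 := by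
  classical
  have h := MvPolynomial.degreeOf_sub_le v (MvPolynomial.X i)
    (MvPolynomial.X j : MvPolynomial (Fin d) ℤ)
  have hXk : ∀ k : Fin d, (MvPolynomial.X k : MvPolynomial (Fin d) ℤ).degreeOf v
      = if v = k then 1 else 0 := fun k => MvPolynomial.degreeOf_X v k
  split_ifs with hv
  · refine le_trans (MvPolynomial.degreeOf_pow_le _ _ _) ?_
    have hle : (MvPolynomial.X i - MvPolynomial.X j : MvPolynomial (Fin d) ℤ).degreeOf v ≤ 1 := by
      refine le_trans h (max_le ?_ ?_) <;> rw [hXk] <;> split_ifs <;> omega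
    omega
  · push_neg at hv
    refine le_trans (MvPolynomial.degreeOf_pow_le _ _ _) ?_
    have hle : (MvPolynomial.X i - MvPolynomial.X j : MvPolynomial (Fin d) ℤ).degreeOf v ≤ 0 := by
      refine le_trans h (max_le ?_ ?_) <;> rw [hXk]
      · rw [if_neg hv.1]
      · rw [if_neg hv.2]
    omega

lemma degreeOf_coeff_FF (hd : 0 < d) (n : ℕ) :
    ((FF d).coeff n).degreeOf ⟨0, hd⟩ ≤ 2 * (d - 1) := by
  classical
  have key := degreeOf_coeff_prod_le (⟨0, hd⟩ : Fin d) Finset.univ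
    (fun i => ∏ j ∈ Finset.Ioi i, (X - C ((MvPolynomial.X i - MvPolynomial.X j) ^ 2)))
    (fun i => if i = ⟨0, hd⟩ then 2 * (d - 1) else 0) ?_ n
  · refine le_trans key ?_
    rw [Finset.sum_ite_eq' Finset.univ (⟨0, hd⟩ : Fin d)]
    simp
  · intro i _ n'
    have key2 := degreeOf_coeff_prod_le (⟨0, hd⟩ : Fin d) (Finset.Ioi i)
      (fun j => (X - C ((MvPolynomial.X i - MvPolynomial.X j) ^ 2)))
      (fun _ => if i = ⟨0, hd⟩ then 2 else 0) ?_ n'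
    · refine le_trans key2 ?_
      beta_reduce
      rw [Finset.sum_const, smul_eq_mul]
      have hcard : (Finset.Ioi i).card ≤ d - 1 := by
        have hsub : Finset.Ioi i ⊆ Finset.univ.erase i :=
          fun j hj => Finset.mem_erase.2 ⟨(Finset.mem_Ioi.1 hj).ne', Finset.mem_univ j⟩
        calc (Finset.Ioi i).card ≤ (Finset.univ.erase i).card := Finset.card_le_card hsub
          _ = d - 1 := by rw [Finset.card_erase_of_mem (Finset.mem_univ i)]; simp
      split_ifs with hi <;> omega
    · intro j hj n''
      refine le_trans (degreeOf_coeff_X_sub_C _ _ _) ?_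
      refine le_trans (degreeOf_sq_diff _ i j) ?_
      beta_reduce
      split_ifs with h1 h2 h2 <;> try omega
      exfalso
      rcases h1 with h1 | h1
      · exact h2 h1.symm
      · have hji : i < j := Finset.mem_Ioi.1 hj
        rw [← h1] at hji
        simpa [Fin.lt_def] using hji

lemma exists_weighted_rep {d m : ℕ} (hd : 0 < d) (p : MvPolynomial (Fin d) ℤ)
    (hp : p.IsSymmetric) (hdeg : p.degreeOf ⟨0, hd⟩ ≤ m) :
    ∃ q : MvPolynomial (Fin d) ℤ,
      (MvPolynomial.aeval (fun i : Fin d => MvPolynomial.esymm (Fin d) ℤ ((i : ℕ) + 1)) q) = p ∧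
      ∀ t ∈ q.support, (∑ i, t i) ≤ m := by
  classical
  obtain ⟨q, hq⟩ := (MvPolynomial.esymmAlgHom_fin_bijective ℤ d).2 ⟨p, hp⟩
  have hqv : (MvPolynomial.esymmAlgHom (Fin d) ℤ d q).val = p := congrArg Subtype.val hq
  refine ⟨q, ?_, ?_⟩
  · rw [← hqv, MvPolynomial.esymmAlgHom_apply]
  rcases eq_or_ne q 0 with rfl | hq0
  · simp
  set f : (Fin d →₀ ℕ) → MvPolynomial (Fin d) ℤ :=
    fun t => MvPolynomial.esymmAlgHomMonomial (Fin d) t (q.coeff t) with hf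
  have hps : p = ∑ t ∈ q.support, f t := by
    conv_lhs => rw [← hqv]
    conv_lhs => rw [q.as_sum]
    rw [map_sum, AddSubmonoidClass.coe_finset_sum]
    rfl
  have hf0 : ∀ t ∈ q.support, f t ≠ 0 := by
    intro t ht
    rw [hf, Ne, ← AddMonoidAlgebra.leadingCoeff_eq_zero toLex.injective,
      MvPolynomial.leadingCoeff_esymmAlgHomMonomial t le_rfl]
    exact MvPolynomial.mem_support_iff.1 ht
  have hsd : ∀ t ∈ q.support,
      ⇑(ofLex (AddMonoidAlgebra.supDegree toLex (f t))) = Fin.accumulate d d t := by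
    intro t ht
    exact MvPolynomial.supDegree_esymmAlgHomMonomial (MvPolynomial.mem_support_iff.1 ht) t le_rfl
  have hinj : Set.InjOn (AddMonoidAlgebra.supDegree toLex ∘ f) q.support := by
    intro t ht s hs he
    have : Fin.accumulate d d t = Fin.accumulate d d s := by
      rw [← hsd t ht, ← hsd s hs]
      simp only [Function.comp] at he
      rw [he]
    exact DFunLike.ext' (Fin.accumulate_injective le_rfl this)
  have hne : q.support.Nonempty := Finset.nonempty_iff_ne_empty.2
    (fun h => hq0 (MvPolynomial.support_eq_empty.1 h))
  obtain ⟨t0, ht0, he⟩ := Finset.exists_mem_eq_sup q.support hne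
    (fun t => AddMonoidAlgebra.supDegree toLex (f t))
  have hmax : ∀ t ∈ q.support, t ≠ t0 →
      AddMonoidAlgebra.supDegree toLex (f t) < AddMonoidAlgebra.supDegree toLex (f t0) := by
    intro t ht hne'
    refine lt_of_le_of_ne ((Finset.le_sup ht).trans_eq he) ?_
    exact fun hc => hne' (hinj ht ht0 hc)
  have hsum := AddMonoidAlgebra.supDegree_leadingCoeff_sum_eq (D := toLex) ht0 hmax
  have hpne : p ≠ 0 := by
    rw [hps]
    exact AddMonoidAlgebra.sum_ne_zero_of_injOn_supDegree
      hne hf0 hinj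
  obtain ⟨μ, hμ, hμe⟩ := AddMonoidAlgebra.exists_supDegree_mem_support toLex hpne
  -- supDegree p = supDegree (f t0)
  have hpd : p.supDegree toLex = AddMonoidAlgebra.supDegree toLex (f t0) := by
    rw [hps]; exact hsum.1
  intro t ht
  have hle : AddMonoidAlgebra.supDegree toLex (f t) ≤ toLex μ := by
    rw [← hμe, hpd, ← he]
    exact Finset.le_sup (f := fun t => AddMonoidAlgebra.supDegree toLex (f t)) ht
  -- extract coordinate 0
  set z0 : Fin d := ⟨0, hd⟩ with hz0
  have hcoord : ofLex (AddMonoidAlgebra.supDegree toLex (f t)) z0 ≤ μ z0 := by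
    rcases (eq_or_lt_of_le hle).imp id Finsupp.Lex.lt_iff.1 with heq | ⟨i, hji, hlt⟩
    · rw [heq]; rfl
    · rcases lt_trichotomy z0 i with hzi | hzi | hzi
      · rw [hji z0 hzi]; rfl
      · rw [hzi]; exact le_of_lt hlt
      · exact absurd hzi (by simp [hz0, Fin.lt_def])
  have hacc : ofLex (AddMonoidAlgebra.supDegree toLex (f t)) z0 = ∑ i, t i := by
    have := congrFun (hsd t ht) z0
    rw [this, Fin.accumulate_apply]
    refine Finset.sum_congr ?_ (fun _ _ => rfl)
    ext i
    simp [hz0]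
  rw [hacc] at hcoord
  refine le_trans hcoord (le_trans ?_ hdeg)
  exact MvPolynomial.monomial_le_degreeOf z0 hμ

lemma vieta_int {d : ℕ} (P : Polynomial ℤ) (a : ℤ) (α : Fin d → ℂ)
    (hPdeg : P.natDegree = d)
    (hmap : P.map (Int.castRingHom ℂ) = C (a : ℂ) * ∏ i, (X - C (α i)))
    (k : ℕ) (hk : k ≤ d) :
    (((-1) ^ k * P.coeff (d - k) : ℤ) : ℂ)
      = (a : ℂ) * MvPolynomial.aeval α (MvPolynomial.esymm (Fin d) ℤ k) := by
  have hs : (∏ i, (X - C (α i)) : Polynomial ℂ)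
      = ((Finset.univ.val.map α).map fun t => X - C t).prod := by
    rw [Finset.prod_eq_multiset_prod, Multiset.map_map]
    rfl
  have hcard : Multiset.card (Finset.univ.val.map α) = d := by simp
  have hkk : d - k ≤ Multiset.card (Finset.univ.val.map α) := by omega
  have hco := Multiset.prod_X_sub_C_coeff (Finset.univ.val.map α) hkk
  rw [hcard, show d - (d - k) = k from by omega] at hco
  have hcoeff : ((P.coeff (d - k) : ℤ) : ℂ)
      = (a : ℂ) * ((-1) ^ k * (Finset.univ.val.map α).esymm k) := by
    have h2 := congrArg (fun p => Polynomial.coeff p (d - k)) hmap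
    simp only [Polynomial.coeff_map, Polynomial.coeff_C_mul] at h2
    rw [hs, hco] at h2
    exact_mod_cast h2
  have h1 : ((-1 : ℂ)) ^ k * (-1 : ℂ) ^ k = 1 := by rw [← mul_pow]; norm_num
  rw [MvPolynomial.aeval_esymm_eq_multiset_esymm]
  push_cast
  rw [hcoeff]
  linear_combination ((a : ℂ) * (Multiset.map α Finset.univ.val).esymm k) * h1

/-- For each `d ≥ 1` there is a constant `c > 0` such that: if `P ∈ ℤ[X]` has
degree `d`, leading coefficient `a`, complex roots `α_1,…,α_d`, and
coefficients bounded by `H ≥ 1`, then the polynomial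
`M(X) = a^{2(d-1)} ∏_{i<j} (X - (α_i - α_j)^2)` has integer coefficients,
all of absolute value at most `c · H^{2(d-1)}`. -/
theorem mahler_auxiliary_polynomial_integer_and_height (d : ℕ) (hd : 1 ≤ d) :
    ∃ c : ℝ, 0 < c ∧
      ∀ (P : Polynomial ℤ) (a : ℤ) (α : Fin d → ℂ) (H : ℝ),
        P.natDegree = d → P.leadingCoeff = a → a ≠ 0 → 1 ≤ H →
        (∀ i, |(P.coeff i : ℝ)| ≤ H) →
        P.map (Int.castRingHom ℂ) = C (a : ℂ) * ∏ i, (X - C (α i)) →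
        ∀ n : ℕ, ∃ z : ℤ,
          (C ((a : ℂ) ^ (2 * (d - 1))) *
            ∏ i : Fin d, ∏ j ∈ Finset.Ioi i,
              (X - C ((α i - α j) ^ 2))).coeff n = (z : ℂ) ∧
          |(z : ℝ)| ≤ c * H ^ (2 * (d - 1)) := by
  classical
  have hd0 : 0 < d := hd
  set m := 2 * (d - 1) with hm
  set N := d * d with hN
  have hex : ∀ n : ℕ, ∃ q : MvPolynomial (Fin d) ℤ,
      (MvPolynomial.aeval (fun i : Fin d => MvPolynomial.esymm (Fin d) ℤ ((i : ℕ) + 1)) q)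
        = (FF d).coeff n ∧ ∀ t ∈ q.support, (∑ i, t i) ≤ m :=
    fun n => exists_weighted_rep hd0 _ (isSymmetric_coeff_FF n) (degreeOf_coeff_FF hd0 n)
  choose Q hQ1 hQ2 using hex
  set c : ℝ := 1 + ∑ n ∈ Finset.range (N + 1), ∑ t ∈ (Q n).support, |(((Q n).coeff t : ℤ) : ℝ)|
    with hc
  have hcsum : (0 : ℝ) ≤ ∑ n ∈ Finset.range (N + 1), ∑ t ∈ (Q n).support,
      |(((Q n).coeff t : ℤ) : ℝ)| := by positivity
  have hcpos : 0 < c := by rw [hc]; linarith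
  refine ⟨c, hcpos, ?_⟩
  intro P a α H hPdeg hPlead ha hH hcoeff hmap n
  have hH0 : (0 : ℝ) < H := lt_of_lt_of_le one_pos hH
  set ψ : MvPolynomial (Fin d) ℤ →ₐ[ℤ] ℂ := MvPolynomial.aeval α with hψ
  have hFmap : (FF d).map (ψ : MvPolynomial (Fin d) ℤ →+* ℂ)
      = ∏ i : Fin d, ∏ j ∈ Finset.Ioi i, (X - C ((α i - α j) ^ 2)) := by
    rw [FF, Polynomial.map_prod]
    refine Finset.prod_congr rfl fun i _ => ?_
    rw [Polynomial.map_prod]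
    refine Finset.prod_congr rfl fun j _ => ?_
    rw [Polynomial.map_sub, Polynomial.map_X, Polynomial.map_C]
    simp [hψ]
  have hcoeffn : (C ((a : ℂ) ^ m) *
      ∏ i : Fin d, ∏ j ∈ Finset.Ioi i, (X - C ((α i - α j) ^ 2))).coeff n
      = (a : ℂ) ^ m * ψ ((FF d).coeff n) := by
    rw [Polynomial.coeff_C_mul, ← hFmap, Polynomial.coeff_map]
    rfl
  by_cases hn : n ≤ N
  · -- main case
    set E : ℕ → ℂ := fun k => ψ (MvPolynomial.esymm (Fin d) ℤ k) with hE
    set w : ℕ → ℤ := fun k => (-1) ^ k * P.coeff (d - k) with hw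
    have hwE : ∀ k, k ≤ d → ((w k : ℤ) : ℂ) = (a : ℂ) * E k := fun k hk =>
      vieta_int P a α hPdeg hmap k hk
    have hwb : ∀ k, |(w k : ℝ)| ≤ H := by
      intro k
      have h1 : ((w k : ℤ) : ℝ) = ((-1) ^ k : ℝ) * (P.coeff (d - k) : ℝ) := by
        rw [hw]; push_cast; ring
      rw [h1, abs_mul, abs_pow, abs_neg, abs_one, one_pow, one_mul]
      exact hcoeff (d - k)
    have haH : |(a : ℝ)| ≤ H := by
      have : a = P.coeff d := by rw [← hPlead, Polynomial.leadingCoeff, hPdeg]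
      rw [this]; exact hcoeff d
    have hexp : ψ ((FF d).coeff n) = ∑ t ∈ (Q n).support,
        (((Q n).coeff t : ℤ) : ℂ) * ∏ i : Fin d, E ((i : ℕ) + 1) ^ t i := by
      rw [← hQ1 n, MvPolynomial.comp_aeval_apply, MvPolynomial.aeval_def,
        MvPolynomial.eval₂_eq']
      refine Finset.sum_congr rfl fun t ht => ?_
      simp [algebraMap_int_eq, E]
    set z : ℤ := ∑ t ∈ (Q n).support,
      (Q n).coeff t * a ^ (m - ∑ i, t i) * ∏ i : Fin d, w ((i : ℕ) + 1) ^ t i with hz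
    refine ⟨z, ?_, ?_⟩
    · rw [hcoeffn, hexp, Finset.mul_sum, hz]
      push_cast
      refine Finset.sum_congr rfl fun t ht => ?_
      have hsle := hQ2 n t ht
      have hppow : ((a : ℂ)) ^ m
          = (a : ℂ) ^ (m - ∑ i, t i) * (a : ℂ) ^ (∑ i, t i) := by
        rw [← pow_add, Nat.sub_add_cancel hsle]
      calc (a : ℂ) ^ m * ((((Q n).coeff t : ℤ) : ℂ) * ∏ i : Fin d, E ((i : ℕ) + 1) ^ t i)
          = (((Q n).coeff t : ℤ) : ℂ) * (a : ℂ) ^ (m - ∑ i, t i) *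
              ((∏ i : Fin d, (a : ℂ) ^ t i) * ∏ i : Fin d, E ((i : ℕ) + 1) ^ t i) := by
            rw [Finset.prod_pow_eq_pow_sum, hppow]; ring
        _ = (((Q n).coeff t : ℤ) : ℂ) * (a : ℂ) ^ (m - ∑ i, t i) *
              ∏ i : Fin d, ((a : ℂ) * E ((i : ℕ) + 1)) ^ t i := by
            rw [← Finset.prod_mul_distrib]
            simp_rw [mul_pow]
        _ = (((Q n).coeff t : ℤ) : ℂ) * (a : ℂ) ^ (m - ∑ i, t i) *
              ∏ i : Fin d, ((w ((i : ℕ) + 1) : ℤ) : ℂ) ^ t i := by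
            congr 1
            refine Finset.prod_congr rfl fun i _ => ?_
            rw [hwE ((i : ℕ) + 1) (by omega)]
        _ = (((Q n).coeff t : ℤ) : ℂ) * (a : ℂ) ^ (m - ∑ i, t i) *
              ∏ i : Fin d, ((w ((i : ℕ) + 1) : ℂ)) ^ t i := by push_cast; ring
    · -- bound
      have hterm : ∀ t ∈ (Q n).support,
          |(((Q n).coeff t : ℤ) : ℝ) * (a : ℝ) ^ (m - ∑ i, t i) *
            ∏ i : Fin d, (w ((i : ℕ) + 1) : ℝ) ^ t i|
          ≤ |(((Q n).coeff t : ℤ) : ℝ)| * H ^ m := by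
        intro t ht
        have hsle := hQ2 n t ht
        rw [abs_mul, abs_mul, abs_pow, Finset.abs_prod]
        have h1 : |(a : ℝ)| ^ (m - ∑ i, t i) ≤ H ^ (m - ∑ i, t i) :=
          pow_le_pow_left₀ (abs_nonneg _) haH _
        have h2 : (∏ i : Fin d, |(w ((i : ℕ) + 1) : ℝ) ^ t i|)
            ≤ ∏ i : Fin d, H ^ t i := by
          refine Finset.prod_le_prod (fun i _ => abs_nonneg _) fun i _ => ?_
          rw [abs_pow]
          exact pow_le_pow_left₀ (abs_nonneg _) (hwb _) _
        calc |(((Q n).coeff t : ℤ) : ℝ)| * |(a : ℝ)| ^ (m - ∑ i, t i) *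
              ∏ i : Fin d, |(w ((i : ℕ) + 1) : ℝ) ^ t i|
            ≤ |(((Q n).coeff t : ℤ) : ℝ)| * H ^ (m - ∑ i, t i) * ∏ i : Fin d, H ^ t i := by
              refine mul_le_mul (mul_le_mul le_rfl h1 (by positivity) (abs_nonneg _)) h2
                (by positivity) (by positivity)
          _ = |(((Q n).coeff t : ℤ) : ℝ)| * H ^ m := by
              rw [Finset.prod_pow_eq_pow_sum, mul_assoc, ← pow_add,
                Nat.sub_add_cancel hsle]
      have hz1 : |(z : ℝ)| ≤ ∑ t ∈ (Q n).support, |(((Q n).coeff t : ℤ) : ℝ)| * H ^ m := by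
        have hcast : ((z : ℤ) : ℝ) = ∑ t ∈ (Q n).support,
            (((Q n).coeff t : ℤ) : ℝ) * (a : ℝ) ^ (m - ∑ i, t i) *
              ∏ i : Fin d, (w ((i : ℕ) + 1) : ℝ) ^ t i := by
          rw [hz]; push_cast; ring
        rw [hcast]
        exact le_trans (Finset.abs_sum_le_sum_abs _ _) (Finset.sum_le_sum hterm)
      have hz2 : (∑ t ∈ (Q n).support, |(((Q n).coeff t : ℤ) : ℝ)|) ≤ c := by
        rw [hc]
        have hmem : n ∈ Finset.range (N + 1) := Finset.mem_range.2 (by omega)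
        have := Finset.single_le_sum
          (f := fun n' => ∑ t ∈ (Q n').support, |(((Q n').coeff t : ℤ) : ℝ)|)
          (fun n' _ => by positivity) hmem
        linarith
      calc |(z : ℝ)| ≤ (∑ t ∈ (Q n).support, |(((Q n).coeff t : ℤ) : ℝ)|) * H ^ m := by
            rw [Finset.sum_mul] at *; exact hz1
        _ ≤ c * H ^ m := mul_le_mul_of_nonneg_right hz2 (by positivity)
  · -- degenerate case: n > N, coefficient is zero
    refine ⟨0, ?_, ?_⟩
    · rw [hcoeffn]
      have hFdeg : (FF d).natDegree ≤ N := by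
        rw [FF]
        refine le_trans (Polynomial.natDegree_prod_le _ _) ?_
        have hin : ∀ i : Fin d,
            (∏ j ∈ Finset.Ioi i,
              (X - C ((MvPolynomial.X i - MvPolynomial.X j) ^ 2)
                : Polynomial (MvPolynomial (Fin d) ℤ))).natDegree ≤ d := by
          intro i
          refine le_trans (Polynomial.natDegree_prod_le _ _) ?_
          calc ∑ j ∈ Finset.Ioi i, (X - C ((MvPolynomial.X i - MvPolynomial.X j) ^ 2)
                  : Polynomial (MvPolynomial (Fin d) ℤ)).natDegree
              ≤ ∑ _j ∈ Finset.Ioi i, 1 :=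
                Finset.sum_le_sum fun j _ => le_of_eq (Polynomial.natDegree_X_sub_C _)
            _ ≤ d := by
                rw [Finset.sum_const, smul_eq_mul, mul_one]
                exact le_trans (Finset.card_le_univ _) (by simp)
        calc ∑ i : Fin d, (∏ j ∈ Finset.Ioi i,
                (X - C ((MvPolynomial.X i - MvPolynomial.X j) ^ 2)
                  : Polynomial (MvPolynomial (Fin d) ℤ))).natDegree
            ≤ ∑ _i : Fin d, d := Finset.sum_le_sum fun i _ => hin i
          _ = N := by simp [hN]
      have : (FF d).coeff n = 0 :=
        Polynomial.coeff_eq_zero_of_natDegree_lt (lt_of_le_of_lt hFdeg (by omega))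
      rw [this]
      simp
    · simp only [Int.cast_zero, abs_zero]
      positivity
end

section
/- For the polynomial P(X,Y) = (-X²/3 + X³/2 + 2X/3 − 1)·Y + X³ − X² + 1 evaluated at Y = √3, all three complex roots of P(X, √3) have absolute value exactly √3 − 1. -/
/-- Every complex root of
`P(X,√3) = (√3/2 + 1)X³ − (√3/3 + 1)X² + (2√3/3)X + 1 − √3`
has absolute value exactly `√3 − 1`. -/
theorem cubic_roots_abs_sqrt3_sub_one (z : ℂ)
    (hz : ((Real.sqrt 3 : ℂ) / 2 + 1) * z ^ 3
        - ((Real.sqrt 3 : ℂ) / 3 + 1) * z ^ 2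
        + (2 * (Real.sqrt 3 : ℂ) / 3) * z + 1 - (Real.sqrt 3 : ℂ) = 0) :
    ‖z‖ = Real.sqrt 3 - 1 := by
  set s : ℝ := Real.sqrt 3 with hsdef
  have hs : s ^ 2 = 3 := Real.sq_sqrt (by norm_num)
  have hs0 : 0 ≤ s := Real.sqrt_nonneg 3
  have hs1 : 1 ≤ s := by nlinarith
  have hsC : (s : ℂ) ^ 2 = 3 := by
    rw [← Complex.ofReal_pow, hs]; norm_num
  -- factorization
  have key : ((s : ℂ) / 2 + 1) * (z - ((s : ℂ) - 1)) *
      (z ^ 2 + ((5 * (s : ℂ) / 3 - 3)) * z + ((s : ℂ) - 1) ^ 2) = 0 := by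
    linear_combination hz + (-(s:ℂ)^2/2 - (s:ℂ)*z/3 + (s:ℂ)/2 + z^2/3 + 2*z/3) * hsC
  have ha : ((s : ℂ) / 2 + 1) ≠ 0 := by
    intro h
    have : (s : ℂ) = -2 := by linear_combination 2 * h
    have : s = -2 := by exact_mod_cast this
    linarith
  rcases mul_eq_zero.mp key with h | hq
  · rcases mul_eq_zero.mp h with h | h
    · exact absurd h ha
    · have hz' : z = ((s - 1 : ℝ) : ℂ) := by
        push_cast; linear_combination h
      rw [hz', Complex.norm_real, Real.norm_eq_abs, abs_of_nonneg (by linarith)]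
  · -- quadratic case
    have hq' : z * z + ((5 * s / 3 - 3 : ℝ) : ℂ) * z + (((s - 1) ^ 2 : ℝ) : ℂ) = 0 := by
      push_cast; linear_combination hq
    rw [Complex.ext_iff] at hq'
    simp only [Complex.add_re, Complex.add_im, Complex.mul_re, Complex.mul_im,
      Complex.ofReal_re, Complex.ofReal_im, Complex.zero_re, Complex.zero_im] at hq'
    obtain ⟨h1, h2⟩ := hq'
    set x := z.re
    set y := z.im
    have h2' : y * (2 * x + (5 * s / 3 - 3)) = 0 := by ring_nf; ring_nf at h2; linarith
    rcases mul_eq_zero.mp h2' with hy | hx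
    · exfalso
      nlinarith [sq_nonneg (2 * x + (5 * s / 3 - 3)), hs, hs1, sq_nonneg x]
    · have hxy : x ^ 2 + y ^ 2 = (s - 1) ^ 2 := by nlinarith [hs, hs1]
      have habs : ‖z‖ ^ 2 = (s - 1) ^ 2 := by
        rw [Complex.sq_norm, Complex.normSq_apply]; ring_nf; ring_nf at hxy; linarith
      nlinarith [norm_nonneg z, hs1, habs]
end

section
/- Suppose a cubic polynomial a_3X³ + a_2X² + a_1X + a_0 with real coefficients and a_3 ≠ 0 has simple roots all of the same nonzero absolute value. Then a_1³ a_3 = a_0 a_2³. -/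
/-- If a real cubic `a₃X³ + a₂X² + a₁X + a₀` (with `a₃ ≠ 0`) has three distinct
complex roots, all of the same nonzero absolute value, then
`a₁³a₃ = a₀a₂³`. -/
theorem cubic_equal_abs_roots_coeff_relation
    (a₀ a₁ a₂ a₃ : ℝ) (ha₃ : a₃ ≠ 0)
    (z₁ z₂ z₃ : ℂ)
    (h12 : z₁ ≠ z₂) (h13 : z₁ ≠ z₃) (h23 : z₂ ≠ z₃)
    (hr1 : (a₃ : ℂ) * z₁ ^ 3 + (a₂ : ℂ) * z₁ ^ 2 + (a₁ : ℂ) * z₁ + a₀ = 0)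
    (hr2 : (a₃ : ℂ) * z₂ ^ 3 + (a₂ : ℂ) * z₂ ^ 2 + (a₁ : ℂ) * z₂ + a₀ = 0)
    (hr3 : (a₃ : ℂ) * z₃ ^ 3 + (a₂ : ℂ) * z₃ ^ 2 + (a₁ : ℂ) * z₃ + a₀ = 0)
    (habs12 : ‖z₁‖ = ‖z₂‖)
    (habs13 : ‖z₁‖ = ‖z₃‖)
    (habsne : ‖z₁‖ ≠ 0) :
    a₁ ^ 3 * a₃ = a₀ * a₂ ^ 3 := by
  have ha₃' : (a₃ : ℂ) ≠ 0 := by exact_mod_cast ha₃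
  have hz1 : z₁ * (starRingEnd ℂ) z₁ = ((‖z₁‖ : ℝ) : ℂ) ^ 2 := by
    rw [Complex.mul_conj]; norm_cast; exact (Complex.sq_norm z₁).symm
  have hz2 : z₂ * (starRingEnd ℂ) z₂ = ((‖z₁‖ : ℝ) : ℂ) ^ 2 := by
    rw [Complex.mul_conj, habs12]; norm_cast; exact (Complex.sq_norm z₂).symm
  have hz3 : z₃ * (starRingEnd ℂ) z₃ = ((‖z₁‖ : ℝ) : ℂ) ^ 2 := by
    rw [Complex.mul_conj, habs13]; norm_cast; exact (Complex.sq_norm z₃).symm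
  have hz1ne : z₁ ≠ 0 := fun h => habsne (by simp [h])
  have hz2ne : z₂ ≠ 0 := fun h => habsne (by rw [habs12, h]; simp)
  have hz3ne : z₃ ≠ 0 := fun h => habsne (by rw [habs13, h]; simp)
  -- Vieta's formulas via divided differences
  have key12 : (z₁ - z₂) * ((a₃ : ℂ) * (z₁ ^ 2 + z₁ * z₂ + z₂ ^ 2) + a₂ * (z₁ + z₂) + a₁) = 0 := by
    linear_combination hr1 - hr2
  have d12 : (a₃ : ℂ) * (z₁ ^ 2 + z₁ * z₂ + z₂ ^ 2) + a₂ * (z₁ + z₂) + a₁ = 0 :=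
    (mul_eq_zero.mp key12).resolve_left (sub_ne_zero.mpr h12)
  have key13 : (z₁ - z₃) * ((a₃ : ℂ) * (z₁ ^ 2 + z₁ * z₃ + z₃ ^ 2) + a₂ * (z₁ + z₃) + a₁) = 0 := by
    linear_combination hr1 - hr3
  have d13 : (a₃ : ℂ) * (z₁ ^ 2 + z₁ * z₃ + z₃ ^ 2) + a₂ * (z₁ + z₃) + a₁ = 0 :=
    (mul_eq_zero.mp key13).resolve_left (sub_ne_zero.mpr h13)
  have key23 : (z₂ - z₃) * ((a₃ : ℂ) * (z₁ + z₂ + z₃) + a₂) = 0 := by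
    linear_combination d12 - d13
  have e1 : (a₃ : ℂ) * (z₁ + z₂ + z₃) + a₂ = 0 :=
    (mul_eq_zero.mp key23).resolve_left (sub_ne_zero.mpr h23)
  have a2eq : (a₂ : ℂ) = -a₃ * (z₁ + z₂ + z₃) := by linear_combination e1
  have a1eq : (a₁ : ℂ) = a₃ * (z₁ * z₂ + z₁ * z₃ + z₂ * z₃) := by
    linear_combination d12 - (z₁ + z₂) * e1
  have a0eq : (a₀ : ℂ) = -a₃ * (z₁ * z₂ * z₃) := by
    linear_combination hr1 - z₁ * a1eq - z₁ ^ 2 * a2eq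
  -- conjugate symmetric functions equal the original ones (coefficients are real)
  have h1c := congrArg (starRingEnd ℂ) e1
  simp only [map_add, map_mul, map_zero, Complex.conj_ofReal] at h1c
  have cs1 : (starRingEnd ℂ) z₁ + (starRingEnd ℂ) z₂ + (starRingEnd ℂ) z₃
      = z₁ + z₂ + z₃ :=
    mul_left_cancel₀ ha₃' (by linear_combination h1c - e1)
  have h2c := congrArg (starRingEnd ℂ) a1eq
  simp only [map_add, map_mul, Complex.conj_ofReal] at h2c
  have cs2 : (starRingEnd ℂ) z₁ * (starRingEnd ℂ) z₂ + (starRingEnd ℂ) z₁ * (starRingEnd ℂ) z₃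
      + (starRingEnd ℂ) z₂ * (starRingEnd ℂ) z₃
      = z₁ * z₂ + z₁ * z₃ + z₂ * z₃ :=
    mul_left_cancel₀ ha₃' (by linear_combination a1eq - h2c)
  have h3c := congrArg (starRingEnd ℂ) a0eq
  simp only [map_mul, map_neg, Complex.conj_ofReal] at h3c
  have cs3 : (starRingEnd ℂ) z₁ * (starRingEnd ℂ) z₂ * (starRingEnd ℂ) z₃ = z₁ * z₂ * z₃ :=
    mul_left_cancel₀ ha₃' (by linear_combination h3c - a0eq)
  -- products of the root-conjugate identities
  have p12 : (z₁ * (starRingEnd ℂ) z₁) * (z₂ * (starRingEnd ℂ) z₂)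
      = ((‖z₁‖ : ℝ) : ℂ) ^ 4 := by rw [hz1, hz2]; ring
  have p13 : (z₁ * (starRingEnd ℂ) z₁) * (z₃ * (starRingEnd ℂ) z₃)
      = ((‖z₁‖ : ℝ) : ℂ) ^ 4 := by rw [hz1, hz3]; ring
  have p23 : (z₂ * (starRingEnd ℂ) z₂) * (z₃ * (starRingEnd ℂ) z₃)
      = ((‖z₁‖ : ℝ) : ℂ) ^ 4 := by rw [hz2, hz3]; ring
  have p123 : (z₁ * (starRingEnd ℂ) z₁) * (z₂ * (starRingEnd ℂ) z₂) * (z₃ * (starRingEnd ℂ) z₃)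
      = ((‖z₁‖ : ℝ) : ℂ) ^ 6 := by rw [hz1, hz2, hz3]; ring
  -- the three key relations
  have rel1 : (z₁ + z₂ + z₃) * (z₁ * z₂ * z₃)
      = ((‖z₁‖ : ℝ) : ℂ) ^ 2 * (z₁ * z₂ + z₁ * z₃ + z₂ * z₃) := by
    linear_combination (z₂ * z₃) * hz1 + (z₁ * z₃) * hz2 + (z₁ * z₂) * hz3
      - (z₁ * z₂ * z₃) * cs1
  have rel2 : (z₁ * z₂ + z₁ * z₃ + z₂ * z₃) * (z₁ * z₂ * z₃)
      = ((‖z₁‖ : ℝ) : ℂ) ^ 4 * (z₁ + z₂ + z₃) := by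
    linear_combination z₃ * p12 + z₂ * p13 + z₁ * p23 - (z₁ * z₂ * z₃) * cs2
  have rel3 : (z₁ * z₂ * z₃) ^ 2 = ((‖z₁‖ : ℝ) : ℂ) ^ 6 := by
    linear_combination p123 - (z₁ * z₂ * z₃) * cs3
  have hs3ne : z₁ * z₂ * z₃ ≠ 0 := mul_ne_zero (mul_ne_zero hz1ne hz2ne) hz3ne
  have key : (z₁ * z₂ + z₁ * z₃ + z₂ * z₃) ^ 3 = (z₁ + z₂ + z₃) ^ 3 * (z₁ * z₂ * z₃) := by
    apply mul_right_cancel₀ (pow_ne_zero 3 hs3ne)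
    calc (z₁ * z₂ + z₁ * z₃ + z₂ * z₃) ^ 3 * (z₁ * z₂ * z₃) ^ 3
        = ((z₁ * z₂ + z₁ * z₃ + z₂ * z₃) * (z₁ * z₂ * z₃)) ^ 3 := by ring
      _ = (((‖z₁‖ : ℝ) : ℂ) ^ 4 * (z₁ + z₂ + z₃)) ^ 3 := by rw [rel2]
      _ = (((‖z₁‖ : ℝ) : ℂ) ^ 6) ^ 2 * (z₁ + z₂ + z₃) ^ 3 := by ring
      _ = ((z₁ * z₂ * z₃) ^ 2) ^ 2 * (z₁ + z₂ + z₃) ^ 3 := by rw [rel3]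
      _ = (z₁ + z₂ + z₃) ^ 3 * (z₁ * z₂ * z₃) * (z₁ * z₂ * z₃) ^ 3 := by ring
  have final : ((a₁ : ℂ)) ^ 3 * a₃ = (a₀ : ℂ) * (a₂ : ℂ) ^ 3 := by
    rw [a1eq, a0eq, a2eq]
    linear_combination (a₃ : ℂ) ^ 4 * key
  exact_mod_cast final
end

section
/- Let P(X,Y) = (-X²/3 + X³/2 + 2X/3 − 1)Y + X³ − X² + 1. For small real ε, the real root of P(X, √3 + ε) (near √3 − 1) and the absolute value of the complex conjugate roots both equal √3 − 1 + (2 − √3)ε + O(ε²); in particular the difference between the absolute value of the real root and that of the complex roots is O(ε²). -/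
private lemma absmul {a b A B : ℝ} (ha : |a| ≤ A) (hb : |b| ≤ B) : |a * b| ≤ A * B := by
  rw [abs_mul]
  exact mul_le_mul ha hb (abs_nonneg _) ((abs_nonneg _).trans ha)

set_option maxHeartbeats 1000000 in
private lemma aux_plus (s ε : ℝ) (hs2 : s^2 = 3) (hsl : (433/250:ℝ) ≤ s)
    (hsu : s ≤ (17321/10000:ℝ)) (hel : -(1/100) ≤ ε) (heu : ε ≤ 1/100) :
    0 ≤ (-((s - 1 + (2 - s) * ε + ε^2) ^ 2) / 3 + (s - 1 + (2 - s) * ε + ε^2) ^ 3 / 2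
        + 2 * (s - 1 + (2 - s) * ε + ε^2) / 3 - 1) * (s + ε)
        + (s - 1 + (2 - s) * ε + ε^2) ^ 3 - (s - 1 + (2 - s) * ε + ε^2) ^ 2 + 1 := by
  have hid : (-((s - 1 + (2 - s) * ε + ε^2) ^ 2) / 3 + (s - 1 + (2 - s) * ε + ε^2) ^ 3 / 2
        + 2 * (s - 1 + (2 - s) * ε + ε^2) / 3 - 1) * (s + ε)
        + (s - 1 + (2 - s) * ε + ε^2) ^ 3 - (s - 1 + (2 - s) * ε + ε^2) ^ 2 + 1
      = ε^2 * ((109/6:ℝ) + (-25:ℝ)*ε^1 + (1/6:ℝ)*ε^2 + (61/6:ℝ)*ε^3 + (4:ℝ)*ε^4 + (1/2:ℝ)*ε^5 + (-55/6:ℝ)*s^1 + (95/6:ℝ)*s^1*ε^1 + (11/6:ℝ)*s^1*ε^2 + (-9/2:ℝ)*s^1*ε^3 + (-1:ℝ)*s^1*ε^4) := by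
    linear_combination ((1/3:ℝ) + (-5/2:ℝ)*ε^1 + (47/6:ℝ)*ε^2 + (-25/6:ℝ)*ε^3 + (-3/2:ℝ)*ε^4 + (-5/6:ℝ)*s^1 + (25/6:ℝ)*s^1*ε^1 + (-29/6:ℝ)*s^1*ε^2 + (1/2:ℝ)*s^1*ε^3 + (1:ℝ)*s^1*ε^4 + (1/2:ℝ)*s^2 + (-3/2:ℝ)*s^2*ε^1 + (3/2:ℝ)*s^2*ε^2 + (-1/2:ℝ)*s^2*ε^3) * hs2
  rw [hid]
  apply mul_nonneg (sq_nonneg _)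
  nlinarith [sq_nonneg ε, sq_nonneg (ε^2), sq_nonneg (ε - 1/100), sq_nonneg (ε + 1/100), mul_nonneg (mul_nonneg (sq_nonneg ε) (sq_nonneg ε)) (sub_nonneg.mpr heu)]

set_option maxHeartbeats 1000000 in
private lemma aux_minus (s ε : ℝ) (hs2 : s^2 = 3) (hsl : (433/250:ℝ) ≤ s)
    (hsu : s ≤ (17321/10000:ℝ)) (hel : -(1/100) ≤ ε) (heu : ε ≤ 1/100) :
    (-((s - 1 + (2 - s) * ε - ε^2) ^ 2) / 3 + (s - 1 + (2 - s) * ε - ε^2) ^ 3 / 2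
        + 2 * (s - 1 + (2 - s) * ε - ε^2) / 3 - 1) * (s + ε)
        + (s - 1 + (2 - s) * ε - ε^2) ^ 3 - (s - 1 + (2 - s) * ε - ε^2) ^ 2 + 1 ≤ 0 := by
  have hid : (-((s - 1 + (2 - s) * ε - ε^2) ^ 2) / 3 + (s - 1 + (2 - s) * ε - ε^2) ^ 3 / 2
        + 2 * (s - 1 + (2 - s) * ε - ε^2) / 3 - 1) * (s + ε)
        + (s - 1 + (2 - s) * ε - ε^2) ^ 3 - (s - 1 + (2 - s) * ε - ε^2) ^ 2 + 1
      = ε^2 * ((73/6:ℝ) + (-89/3:ℝ)*ε^1 + (161/6:ℝ)*ε^2 + (-65/6:ℝ)*ε^3 + (2:ℝ)*ε^4 + (-1/2:ℝ)*ε^5 + (-47/6:ℝ)*s^1 + (95/6:ℝ)*s^1*ε^1 + (-29/2:ℝ)*s^1*ε^2 + (15/2:ℝ)*s^1*ε^3 + (-2:ℝ)*s^1*ε^4) := by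
    linear_combination ((1/3:ℝ) + (-5/2:ℝ)*ε^1 + (55/6:ℝ)*ε^2 + (-29/2:ℝ)*ε^3 + (21/2:ℝ)*ε^4 + (-3:ℝ)*ε^5 + (-5/6:ℝ)*s^1 + (25/6:ℝ)*s^1*ε^1 + (-47/6:ℝ)*s^1*ε^2 + (13/2:ℝ)*s^1*ε^3 + (-2:ℝ)*s^1*ε^4 + (1/2:ℝ)*s^2 + (-3/2:ℝ)*s^2*ε^1 + (3/2:ℝ)*s^2*ε^2 + (-1/2:ℝ)*s^2*ε^3) * hs2
  rw [hid]
  refine mul_nonpos_iff.mpr (Or.inl ⟨sq_nonneg _, ?_⟩)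
  nlinarith [sq_nonneg ε, sq_nonneg (ε^2), sq_nonneg (ε - 1/100), sq_nonneg (ε + 1/100), mul_nonneg (mul_nonneg (sq_nonneg ε) (sq_nonneg ε)) (sub_nonneg.mpr heu)]

set_option maxHeartbeats 1000000 in
private lemma aux_qbound (s ε u : ℝ) (hs2 : s^2 = 3) (hsl : (433/250:ℝ) ≤ s)
    (hsu : s ≤ (17321/10000:ℝ)) (hel : -(1/100) ≤ ε) (heu : ε ≤ 1/100)
    (hx1 : -(ε^2) ≤ u) (hx2 : u ≤ ε^2) :
    -((13/10) * ε^2) ≤ (1:ℝ)*u^2 + (-1/3:ℝ)*ε^1*u^1 + (1/2:ℝ)*ε^1*u^2 + (-2/3:ℝ)*ε^2 + (2:ℝ)*ε^2*u^1 + (2/3:ℝ)*s^1*u^1 + (1/2:ℝ)*s^1*u^2 + (1:ℝ)*s^1*ε^1*u^1 + (1/3:ℝ)*s^1*ε^2 + (-1:ℝ)*s^1*ε^2*u^1 ∧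
    (1:ℝ)*u^2 + (-1/3:ℝ)*ε^1*u^1 + (1/2:ℝ)*ε^1*u^2 + (-2/3:ℝ)*ε^2 + (2:ℝ)*ε^2*u^1 + (2/3:ℝ)*s^1*u^1 + (1/2:ℝ)*s^1*u^2 + (1:ℝ)*s^1*ε^1*u^1 + (1/3:ℝ)*s^1*ε^2 + (-1:ℝ)*s^1*ε^2*u^1 ≤ (13/10) * ε^2 := by
  have hs_abs : |s| ≤ (17321/10000:ℝ) := abs_le.mpr ⟨by linarith, hsu⟩
  have he_abs : |ε| ≤ (1/100:ℝ) := abs_le.mpr ⟨hel, heu⟩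
  have hu_abs : |u| ≤ ε^2 := abs_le.mpr ⟨hx1, hx2⟩
  have he2 : ε^2 ≤ 1/10000 := by nlinarith
  have hee : ε^2*ε^2 ≤ (1/10000)*ε^2 := by nlinarith [he2, sq_nonneg ε]
  have he4 : 0 ≤ ε^2*ε^2 := by positivity
  have hq0 := abs_le.mp (absmul hu_abs hu_abs)
  have hq1 := abs_le.mp (absmul he_abs hu_abs)
  have hq2 := abs_le.mp (absmul (absmul he_abs hu_abs) hu_abs)
  have hq3 := abs_le.mp (absmul (absmul he_abs he_abs) hu_abs)
  have hq4 := abs_le.mp (absmul hs_abs hu_abs)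
  have hq5 := abs_le.mp (absmul (absmul hs_abs hu_abs) hu_abs)
  have hq6 := abs_le.mp (absmul (absmul hs_abs he_abs) hu_abs)
  have hq7 : (433/250)*ε^2 ≤ s*ε^2 ∧ s*ε^2 ≤ (17321/10000)*ε^2 := by
    constructor <;> nlinarith [sq_nonneg ε]
  have hq8 := abs_le.mp (absmul (absmul (absmul hs_abs he_abs) he_abs) hu_abs)
  constructor
  · linarith only [hq0.1, hq1.1, hq2.1, hq3.1, hq4.1, hq5.1, hq6.1, hq7.1, hq8.1, hq0.2, hq1.2, hq2.2, hq3.2, hq4.2, hq5.2, hq6.2, hq7.2, hq8.2, hee, he4, sq_nonneg ε, hsl, hsu, hel, heu]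
  · linarith only [hq0.1, hq1.1, hq2.1, hq3.1, hq4.1, hq5.1, hq6.1, hq7.1, hq8.1, hq0.2, hq1.2, hq2.2, hq3.2, hq4.2, hq5.2, hq6.2, hq7.2, hq8.2, hee, he4, sq_nonneg ε, hsl, hsu, hel, heu]

set_option maxHeartbeats 1000000 in
private lemma aux_Dpos (s ε u : ℝ) (hs2 : s^2 = 3) (hsl : (433/250:ℝ) ≤ s)
    (hsu : s ≤ (17321/10000:ℝ)) (hel : -(1/100) ≤ ε) (heu : ε ≤ 1/100)
    (hx1 : -(ε^2) ≤ u) (hx2 : u ≤ ε^2) :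
    (3:ℝ) < (11/3:ℝ) + (9/2:ℝ)*u^1 + (21/4:ℝ)*u^2 + (31/6:ℝ)*ε^1 + (13/3:ℝ)*ε^1*u^1 + (3:ℝ)*ε^1*u^2 + (35/36:ℝ)*ε^2 + (7/6:ℝ)*ε^2*u^1 + (3/4:ℝ)*ε^2*u^2 + (-31/6:ℝ)*ε^3 + (3:ℝ)*ε^3*u^1 + (21/4:ℝ)*ε^4 + (13/6:ℝ)*s^1 + (17/6:ℝ)*s^1*u^1 + (3:ℝ)*s^1*u^2 + (47/18:ℝ)*s^1*ε^1 + (23/6:ℝ)*s^1*ε^1*u^1 + (3/2:ℝ)*s^1*ε^1*u^2 + (3/2:ℝ)*s^1*ε^2 + (3/2:ℝ)*s^1*ε^2*u^1 + (10/3:ℝ)*s^1*ε^3 + (-3/2:ℝ)*s^1*ε^3*u^1 + (-3:ℝ)*s^1*ε^4 := by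
  have hs_abs : |s| ≤ (17321/10000:ℝ) := abs_le.mpr ⟨by linarith, hsu⟩
  have he_abs : |ε| ≤ (1/100:ℝ) := abs_le.mpr ⟨hel, heu⟩
  have hu_abs : |u| ≤ ε^2 := abs_le.mpr ⟨hx1, hx2⟩
  have he2 : ε^2 ≤ 1/10000 := by nlinarith
  have hee : ε^2*ε^2 ≤ (1/10000)*ε^2 := by nlinarith [he2, sq_nonneg ε]
  have he4 : 0 ≤ ε^2*ε^2 := by positivity
  have hq0 := abs_le.mp (absmul hu_abs hu_abs)
  have hq1 := abs_le.mp (absmul he_abs hu_abs)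
  have hq2 := abs_le.mp (absmul (absmul he_abs hu_abs) hu_abs)
  have hq3 := abs_le.mp (absmul (absmul he_abs he_abs) hu_abs)
  have hq4 := abs_le.mp (absmul hs_abs hu_abs)
  have hq5 := abs_le.mp (absmul (absmul hs_abs hu_abs) hu_abs)
  have hq6 := abs_le.mp (absmul (absmul hs_abs he_abs) hu_abs)
  have hq7 : (433/250)*ε^2 ≤ s*ε^2 ∧ s*ε^2 ≤ (17321/10000)*ε^2 := by
    constructor <;> nlinarith [sq_nonneg ε]
  have hq8 := abs_le.mp (absmul (absmul (absmul hs_abs he_abs) he_abs) hu_abs)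
  have hd3 := abs_le.mp (absmul he_abs he_abs)
  have hd5 := abs_le.mp (absmul (absmul (absmul he_abs he_abs) hu_abs) hu_abs)
  have hd6 := abs_le.mp (absmul (absmul he_abs he_abs) he_abs)
  have hd7 := abs_le.mp (absmul (absmul (absmul he_abs he_abs) he_abs) hu_abs)
  have hd8 := abs_le.mp (absmul (absmul (absmul he_abs he_abs) he_abs) he_abs)
  have hd11 := abs_le.mp (absmul hs_abs he_abs)
  have hd13 := abs_le.mp (absmul (absmul (absmul hs_abs he_abs) hu_abs) hu_abs)
  have hd14 := abs_le.mp (absmul (absmul hs_abs he_abs) he_abs)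
  have hd15 := abs_le.mp (absmul (absmul (absmul hs_abs he_abs) he_abs) hu_abs)
  have hd16 := abs_le.mp (absmul (absmul (absmul hs_abs he_abs) he_abs) he_abs)
  have hd17 := abs_le.mp (absmul (absmul (absmul (absmul hs_abs he_abs) he_abs) he_abs) hu_abs)
  have hd18 := abs_le.mp (absmul (absmul (absmul (absmul hs_abs he_abs) he_abs) he_abs) he_abs)
  linarith only [hq0.1, hq1.1, hq2.1, hq3.1, hq4.1, hq5.1, hq6.1, hq7.1, hq8.1, hq0.2, hq1.2, hq2.2, hq3.2, hq4.2, hq5.2, hq6.2, hq7.2, hq8.2, hd3.1, hd5.1, hd6.1, hd7.1, hd8.1, hd11.1, hd13.1, hd14.1, hd15.1, hd16.1, hd17.1, hd18.1, hd3.2, hd5.2, hd6.2, hd7.2, hd8.2, hd11.2, hd13.2, hd14.2, hd15.2, hd16.2, hd17.2, hd18.2, hee, he4, he2, sq_nonneg ε, hsl, hsu, hel, heu, hx1, hx2]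

private lemma aux_E2id (s ε x : ℝ) (hs2 : s^2 = 3) :
    2*(s + ε)/3 + (-(s + ε)/3 - 1 + ((s + ε)/2 + 1) * x) * x
        - ((s + ε)/2 + 1) * (s - 1 + (2 - s) * ε)^2
      = (1:ℝ)*(x - (s - 1 + (2 - s) * ε))^2 + (-1/3:ℝ)*ε^1*(x - (s - 1 + (2 - s) * ε))^1 + (1/2:ℝ)*ε^1*(x - (s - 1 + (2 - s) * ε))^2 + (-2/3:ℝ)*ε^2 + (2:ℝ)*ε^2*(x - (s - 1 + (2 - s) * ε))^1 + (2/3:ℝ)*s^1*(x - (s - 1 + (2 - s) * ε))^1 + (1/2:ℝ)*s^1*(x - (s - 1 + (2 - s) * ε))^2 + (1:ℝ)*s^1*ε^1*(x - (s - 1 + (2 - s) * ε))^1 + (1/3:ℝ)*s^1*ε^2 + (-1:ℝ)*s^1*ε^2*(x - (s - 1 + (2 - s) * ε))^1 := by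
  linear_combination ((-1/3:ℝ) + (1:ℝ)*(x - (s - 1 + (2 - s) * ε))^1 + (1/3:ℝ)*ε^1 + (-1:ℝ)*ε^1*(x - (s - 1 + (2 - s) * ε))^1) * hs2

set_option maxHeartbeats 1000000 in
private lemma aux_Did (s ε x : ℝ) (hs2 : s^2 = 3) :
    4*((s + ε)/2 + 1)*(2*(s + ε)/3 + (-(s + ε)/3 - 1 + ((s + ε)/2 + 1) * x) * x)
        - (-(s + ε)/3 - 1 + ((s + ε)/2 + 1) * x)^2
      = (11/3:ℝ) + (9/2:ℝ)*(x - (s - 1 + (2 - s) * ε))^1 + (21/4:ℝ)*(x - (s - 1 + (2 - s) * ε))^2 + (31/6:ℝ)*ε^1 + (13/3:ℝ)*ε^1*(x - (s - 1 + (2 - s) * ε))^1 + (3:ℝ)*ε^1*(x - (s - 1 + (2 - s) * ε))^2 + (35/36:ℝ)*ε^2 + (7/6:ℝ)*ε^2*(x - (s - 1 + (2 - s) * ε))^1 + (3/4:ℝ)*ε^2*(x - (s - 1 + (2 - s) * ε))^2 + (-31/6:ℝ)*ε^3 + (3:ℝ)*ε^3*(x - (s - 1 + (2 - s) * ε))^1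 + (21/4:ℝ)*ε^4 + (13/6:ℝ)*s^1 + (17/6:ℝ)*s^1*(x - (s - 1 + (2 - s) * ε))^1 + (3:ℝ)*s^1*(x - (s - 1 + (2 - s) * ε))^2 + (47/18:ℝ)*s^1*ε^1 + (23/6:ℝ)*s^1*ε^1*(x - (s - 1 + (2 - s) * ε))^1 + (3/2:ℝ)*s^1*ε^1*(x - (s - 1 + (2 - s) * ε))^2 + (3/2:ℝ)*s^1*ε^2 + (3/2:ℝ)*s^1*ε^2*(x - (s - 1 + (2 - s) * ε))^1 + (10/3:ℝ)*s^1*ε^3 + (-3/2:ℝ)*s^1*ε^3*(x - (s - 1 + (2 - s) * ε))^1 + (-3:ℝ)*s^1*ε^4 := by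
  linear_combination ((-1/9:ℝ) + (25/6:ℝ)*(x - (s - 1 + (2 - s) * ε))^1 + (3/4:ℝ)*(x - (s - 1 + (2 - s) * ε))^2 + (29/6:ℝ)*ε^1 + (2/3:ℝ)*ε^2 + (-3:ℝ)*ε^2*(x - (s - 1 + (2 - s) * ε))^1 + (-9/2:ℝ)*ε^3 + (3/4:ℝ)*ε^4 + (7/6:ℝ)*s^1 + (3/2:ℝ)*s^1*(x - (s - 1 + (2 - s) * ε))^1 + (1/3:ℝ)*s^1*ε^1 + (-3/2:ℝ)*s^1*ε^1*(x - (s - 1 + (2 - s) * ε))^1 + (-3:ℝ)*s^1*ε^2 + (3/2:ℝ)*s^1*ε^3 + (3/4:ℝ)*s^2 + (-3/2:ℝ)*s^2*ε^1 + (3/4:ℝ)*s^2*ε^2) * hs2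

set_option maxHeartbeats 2000000 in
/-- For `P(X,Y) = (-X²/3 + X³/2 + 2X/3 − 1)Y + X³ − X² + 1` and small real
`ε`, the real root of `P(X, √3 + ε)` near `√3 − 1` and the common absolute
value of the complex conjugate roots both equal
`√3 − 1 + (2 − √3)ε + O(ε²)`; in particular the difference between the
absolute value of the real root and that of the complex roots is `O(ε²)`. -/
theorem perturbed_cubic_roots_expansion :
    ∃ C : ℝ, 0 < C ∧ ∃ δ : ℝ, 0 < δ ∧ ∀ ε : ℝ, |ε| < δ →
      ∃ (x : ℝ) (z : ℂ),
        (-(x ^ 2) / 3 + x ^ 3 / 2 + 2 * x / 3 - 1) * (Real.sqrt 3 + ε)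
            + x ^ 3 - x ^ 2 + 1 = 0 ∧
        (-(z ^ 2) / 3 + z ^ 3 / 2 + 2 * z / 3 - 1) * ((Real.sqrt 3 + ε : ℝ) : ℂ)
            + z ^ 3 - z ^ 2 + 1 = 0 ∧
        z.im ≠ 0 ∧
        |x - (Real.sqrt 3 - 1 + (2 - Real.sqrt 3) * ε)| ≤ C * ε ^ 2 ∧
        |‖z‖ - (Real.sqrt 3 - 1 + (2 - Real.sqrt 3) * ε)| ≤ C * ε ^ 2 ∧
        |(|x| - ‖z‖)| ≤ C * ε ^ 2 := by
  have hs2 : Real.sqrt 3 ^ 2 = 3 := Real.sq_sqrt (by norm_num)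
  set s := Real.sqrt 3 with hsdef
  have hs0 : 0 ≤ s := Real.sqrt_nonneg 3
  have hsl : (433/250 : ℝ) ≤ s := by nlinarith
  have hsu : s ≤ (17321/10000 : ℝ) := by nlinarith
  refine ⟨3, by norm_num, 1/100, by norm_num, fun ε hε => ?_⟩
  obtain ⟨hel, heu⟩ := abs_le.mp hε.le
  obtain ⟨xh, hxh⟩ : ∃ xh : ℝ, xh = s - 1 + (2 - s) * ε := ⟨_, rfl⟩
  set f : ℝ → ℝ := fun t => (-(t ^ 2) / 3 + t ^ 3 / 2 + 2 * t / 3 - 1) * (s + ε) + t ^ 3 - t ^ 2 + 1 with hf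
  have hplus : 0 ≤ f (xh + ε^2) := by
    simp only [hf]
    rw [hxh]
    exact aux_plus s ε hs2 hsl hsu hel heu
  have hminus : f (xh - ε^2) ≤ 0 := by
    simp only [hf]
    rw [hxh]
    exact aux_minus s ε hs2 hsl hsu hel heu
  have hle : xh - ε^2 ≤ xh + ε^2 := by nlinarith [sq_nonneg ε]
  have hcont : ContinuousOn f (Set.Icc (xh - ε^2) (xh + ε^2)) := by
    apply Continuous.continuousOn
    simp only [hf]
    continuity
  have hmem : (0:ℝ) ∈ Set.Icc (f (xh - ε^2)) (f (xh + ε^2)) := ⟨hminus, hplus⟩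
  obtain ⟨x, hxmem, hfx⟩ := intermediate_value_Icc hle hcont hmem
  obtain ⟨hxlo, hxhi⟩ := hxmem
  have he2 : ε^2 ≤ 1/10000 := by nlinarith
  have hxhl : (69/100:ℝ) ≤ xh := by
    rw [hxh]
    nlinarith [mul_nonneg (sub_nonneg.mpr hsu) (sub_nonneg.mpr heu), mul_nonneg (sub_nonneg.mpr hsu) (sub_nonneg.mpr hel)]
  have hxhu : xh ≤ (77/100:ℝ) := by
    rw [hxh]
    nlinarith [mul_nonneg (sub_nonneg.mpr hsu) (sub_nonneg.mpr heu), mul_nonneg (sub_nonneg.mpr hsu) (sub_nonneg.mpr hel)]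
  have hxl : (0.68:ℝ) ≤ x := by nlinarith
  have hxu : x ≤ (0.78:ℝ) := by nlinarith
  have hfx' : (-(x ^ 2) / 3 + x ^ 3 / 2 + 2 * x / 3 - 1) * (s + ε) + x ^ 3 - x ^ 2 + 1 = 0 := hfx
  obtain ⟨a, ha⟩ : ∃ a : ℝ, a = (s + ε)/2 + 1 := ⟨_, rfl⟩
  obtain ⟨p, hp⟩ : ∃ p : ℝ, p = -(s + ε)/3 - 1 + a * x := ⟨_, rfl⟩
  obtain ⟨q, hq⟩ : ∃ q : ℝ, q = 2*(s + ε)/3 + p * x := ⟨_, rfl⟩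
  have ha1 : (186/100:ℝ) ≤ a := by rw [ha]; linarith only [hsl, hel]
  have ha0 : (0:ℝ) < a := lt_of_lt_of_le (by norm_num) ha1
  have hqx : q * x + (1 - (s + ε)) = 0 := by
    rw [hq, hp, ha]; linear_combination hfx'
  have hqpos : 0 < q := by nlinarith [hqx, hxl, hsl, hel]
  have hE2 : q - a * xh^2
      = (1:ℝ)*(x - xh)^2 + (-1/3:ℝ)*ε^1*(x - xh)^1 + (1/2:ℝ)*ε^1*(x - xh)^2 + (-2/3:ℝ)*ε^2 + (2:ℝ)*ε^2*(x - xh)^1 + (2/3:ℝ)*s^1*(x - xh)^1 + (1/2:ℝ)*s^1*(x - xh)^2 + (1:ℝ)*s^1*ε^1*(x - xh)^1 + (1/3:ℝ)*s^1*ε^2 + (-1:ℝ)*s^1*ε^2*(x - xh)^1 := by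
    rw [hq, hp, ha, hxh]
    exact aux_E2id s ε x hs2
  have hDid : 4*a*q - p^2
      = (11/3:ℝ) + (9/2:ℝ)*(x - xh)^1 + (21/4:ℝ)*(x - xh)^2 + (31/6:ℝ)*ε^1 + (13/3:ℝ)*ε^1*(x - xh)^1 + (3:ℝ)*ε^1*(x - xh)^2 + (35/36:ℝ)*ε^2 + (7/6:ℝ)*ε^2*(x - xh)^1 + (3/4:ℝ)*ε^2*(x - xh)^2 + (-31/6:ℝ)*ε^3 + (3:ℝ)*ε^3*(x - xh)^1 + (21/4:ℝ)*ε^4 + (13/6:ℝ)*s^1 + (17/6:ℝ)*s^1*(x - xh)^1 + (3:ℝ)*s^1*(x - xh)^2 + (47/18:ℝ)*s^1*ε^1 + (23/6:ℝ)*s^1*ε^1*(x - xh)^1 + (3/2:ℝ)*s^1*ε^1*(x - xh)^2 + (3/2:ℝ)*s^1*ε^2 + (3/2:ℝ)*s^1*ε^2*(x - xh)^1 + (10/3:ℝ)*s^1*ε^3 + (-3/2:ℝ)*s^1*ε^3*(x - xh)^1 + (-3:ℝ)*s^1*ε^4 := by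
    rw [hq, hp, ha, hxh]
    exact aux_Did s ε x hs2
  have hqbound : |q - a * xh^2| ≤ (13/10) * ε^2 := by
    rw [hE2, abs_le]
    exact aux_qbound s ε (x - xh) hs2 hsl hsu hel heu (by linarith only [hxlo]) (by linarith only [hxhi])
  have hDpos : (3:ℝ) < 4*a*q - p^2 := by
    rw [hDid]
    exact aux_Dpos s ε (x - xh) hs2 hsl hsu hel heu (by linarith only [hxlo]) (by linarith only [hxhi])
  obtain ⟨D, hD⟩ : ∃ D : ℝ, D = 4*a*q - p^2 := ⟨_, rfl⟩
  have hDpos' : (0:ℝ) < D := by rw [hD]; linarith only [hDpos]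
  obtain ⟨im0, him0⟩ : ∃ im0 : ℝ, im0 = Real.sqrt D / (2*a) := ⟨_, rfl⟩
  set z : ℂ := ((-p/(2*a) : ℝ) : ℂ) + ((im0 : ℝ) : ℂ) * Complex.I with hz
  have hsqD : Real.sqrt D ^ 2 = D := Real.sq_sqrt hDpos'.le
  have hsqDpos : 0 < Real.sqrt D := Real.sqrt_pos.mpr hDpos'
  have him : z.im = im0 := by
    rw [hz]
    simp only [Complex.add_im, Complex.mul_im, Complex.ofReal_im, Complex.ofReal_re,
      Complex.I_im, Complex.I_re]
    ring
  have himne : z.im ≠ 0 := by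
    rw [him, him0]
    positivity
  have hane : ((a:ℝ):ℂ) ≠ 0 := by exact_mod_cast ne_of_gt ha0
  have hzq : ((a:ℝ):ℂ) * z^2 + ((p:ℝ):ℂ) * z + ((q:ℝ):ℂ) = 0 := by
    have h1 : 2*((a:ℝ):ℂ)*z + ((p:ℝ):ℂ) = ((Real.sqrt D : ℝ):ℂ) * Complex.I := by
      rw [hz, him0]
      push_cast
      field_simp
      ring
    have h2 : (2*((a:ℝ):ℂ)*z + ((p:ℝ):ℂ))^2 = -((D:ℝ):ℂ) := by
      rw [h1]
      have hc : ((Real.sqrt D : ℝ):ℂ)^2 = ((D:ℝ):ℂ) := by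
        exact_mod_cast congrArg (fun r : ℝ => ((r:ℝ):ℂ)) hsqD
      rw [mul_pow, hc, Complex.I_sq]
      ring
    have h3 : ((D:ℝ):ℂ) = 4*((a:ℝ):ℂ)*((q:ℝ):ℂ) - ((p:ℝ):ℂ)^2 := by
      rw [hD]; push_cast; ring
    have h4 : (4:ℂ)*((a:ℝ):ℂ) * (((a:ℝ):ℂ) * z^2 + ((p:ℝ):ℂ) * z + ((q:ℝ):ℂ)) = 0 := by
      linear_combination h2 - h3
    have h5 : (4:ℂ)*((a:ℝ):ℂ) ≠ 0 := by simp [hane]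
    exact (mul_eq_zero.mp h4).resolve_left h5
  have hzcubic : (-(z ^ 2) / 3 + z ^ 3 / 2 + 2 * z / 3 - 1) * ((s + ε : ℝ) : ℂ) + z ^ 3 - z ^ 2 + 1 = 0 := by
    have hqxC : ((q:ℝ):ℂ) * ((x:ℝ):ℂ) + (1 - (((s:ℝ):ℂ) + ((ε:ℝ):ℂ))) = 0 := by
      have h := congrArg (fun r : ℝ => ((r:ℝ):ℂ)) hqx
      push_cast at h
      convert h using 1
      try ring
    have haC : ((a:ℝ):ℂ) = (((s:ℝ):ℂ) + ((ε:ℝ):ℂ))/2 + 1 := by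
      rw [ha]; push_cast; ring
    have hpC : ((p:ℝ):ℂ) = -(((s:ℝ):ℂ) + ((ε:ℝ):ℂ))/3 - 1 + ((a:ℝ):ℂ) * ((x:ℝ):ℂ) := by
      rw [hp]; push_cast; ring
    have hqC : ((q:ℝ):ℂ) = 2*(((s:ℝ):ℂ) + ((ε:ℝ):ℂ))/3 + ((p:ℝ):ℂ) * ((x:ℝ):ℂ) := by
      rw [hq]; push_cast; ring
    push_cast
    linear_combination (z - ((x:ℝ):ℂ)) * hzq + hqxC - z^3 * haC - z^2 * hpC - z * hqC
  obtain ⟨r, hr⟩ : ∃ r : ℝ, r = Real.sqrt (q / a) := ⟨_, rfl⟩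
  have habs : ‖z‖ = r := by
    rw [hz, Complex.norm_def, Complex.normSq_add_mul_I, hr]
    congr 1
    rw [him0, div_pow, div_pow, hsqD, hD]
    field_simp
    try ring
  have hqa0 : 0 ≤ q / a := (div_pos hqpos ha0).le
  have hr2 : r^2 = q/a := by rw [hr]; exact Real.sq_sqrt hqa0
  have hr0 : 0 ≤ r := by rw [hr]; exact Real.sqrt_nonneg _
  have hamul : 0 ≤ ε^2 * (a - 186/100) := mul_nonneg (sq_nonneg ε) (by linarith only [ha1])
  have hqadiff : -(7/10*ε^2) ≤ q/a - xh^2 ∧ q/a - xh^2 ≤ 7/10*ε^2 := by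
    have hane' : a ≠ 0 := ne_of_gt ha0
    have hquo : q/a - xh^2 = (q - a*xh^2)/a := by field_simp
    obtain ⟨hb1, hb2⟩ := abs_le.mp hqbound
    constructor
    · rw [hquo, le_div_iff₀ ha0]
      linarith only [hb1, hamul, sq_nonneg ε]
    · rw [hquo, div_le_iff₀ ha0]
      linarith only [hb2, hamul, sq_nonneg ε]
  have hrxh : |r - xh| ≤ 2*ε^2 := by
    rw [abs_le]
    constructor
    · nlinarith only [hr2, hr0, hqadiff.1, hqadiff.2, sq_nonneg ε, hxhl, hxhu, he2]
    · nlinarith only [hr2, hr0, hqadiff.1, hqadiff.2, sq_nonneg ε, hxhl, hxhu, he2]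
  obtain ⟨hrx1, hrx2⟩ := abs_le.mp hrxh
  rw [← hxh]
  refine ⟨x, z, hfx', hzcubic, himne, ?_, ?_, ?_⟩
  · rw [abs_le]
    constructor <;> linarith only [hxlo, hxhi, sq_nonneg ε]
  · rw [habs, abs_le]
    constructor <;> linarith only [hrx1, hrx2, sq_nonneg ε]
  · rw [abs_of_nonneg (by linarith only [hxl] : (0:ℝ) ≤ x), habs, abs_le]
    constructor <;> linarith only [hrx1, hrx2, hxlo, hxhi, sq_nonneg ε]
end

section
/- Let p/q be a convergent of the continued fraction expansion of √3 and ε = |p/q − √3|. Then ε < 1/q². Consequently, for the cubic polynomial P_q(X) obtained by clearing denominators in P(X, p/q) where P(X,Y) = (-X²/3 + X³/2 + 2X/3 − 1)Y + X³ − X² + 1, one has nonzero roots α, β with 0 < ||α| − |β|| = O(q^{-4}) while the height of P_q is O(q). -/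
-- quadratic root lemma
lemma quad_root (a b c : ℝ) (ha : 0 < a) (hD : 0 < 4*a*c - b^2) :
    ∃ β : ℂ, (a:ℂ)*β^2 + (b:ℂ)*β + (c:ℂ) = 0 ∧ β.im ≠ 0 ∧ ‖β‖ ^ 2 = c/a := by
  set s := Real.sqrt (4*a*c - b^2) with hsdef
  have hs : s^2 = 4*a*c - b^2 := Real.sq_sqrt hD.le
  have hspos : 0 < s := Real.sqrt_pos.2 hD
  have hane : a ≠ 0 := ha.ne'
  set x := -b/(2*a) with hxdef
  set y := s/(2*a) with hydef
  have hre : a*(x^2 - y^2) + b*x + c = 0 := by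
    rw [hxdef, hydef]; field_simp; linear_combination (-1 : ℝ) * hs
  have him : 2*a*x*y + b*y = 0 := by
    rw [hxdef, hydef]; field_simp; ring
  refine ⟨(x:ℂ) + (y:ℂ)*Complex.I, ?_, ?_, ?_⟩
  · have hreC : (a:ℂ)*((x:ℂ)^2 - (y:ℂ)^2) + (b:ℂ)*(x:ℂ) + (c:ℂ) = 0 := by exact_mod_cast hre
    have himC : 2*(a:ℂ)*(x:ℂ)*(y:ℂ) + (b:ℂ)*(y:ℂ) = 0 := by exact_mod_cast him
    linear_combination hreC + Complex.I * himC + (a:ℂ)*(y:ℂ)^2 * Complex.I_sq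
  · have : ((x:ℂ) + (y:ℂ)*Complex.I).im = y := by simp
    rw [this]
    positivity
  · rw [Complex.sq_norm, Complex.normSq_add_mul_I]
    rw [hxdef, hydef]; field_simp; linear_combination (1 : ℝ) * hs

set_option maxHeartbeats 1000000 in
lemma aux_quad (v a : ℝ) (hv1 : (1.72:ℝ) ≤ v) (hv2 : v ≤ 1.75)
    (ha1 : (0.71:ℝ) ≤ a) (ha2 : a ≤ 0.745) :
    (0.8:ℝ) ≤ 2*v/3 - (v/3+1)*a + (v/2+1)*a^2 ∧
    2*v/3 - (v/3+1)*a + (v/2+1)*a^2 ≤ (1.2:ℝ) ∧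
    0 < 4*(v/2+1)*(2*v/3 - (v/3+1)*a + (v/2+1)*a^2) - (-(v/3+1) + (v/2+1)*a)^2 := by
  have hB1 : -(0.3:ℝ) ≤ -(v/3+1) + (v/2+1)*a := by nlinarith
  have hB2 : -(v/3+1) + (v/2+1)*a ≤ -(0.1:ℝ) := by nlinarith
  have hC1 : (0.8:ℝ) ≤ 2*v/3 - (v/3+1)*a + (v/2+1)*a^2 := by nlinarith
  have hC2 : 2*v/3 - (v/3+1)*a + (v/2+1)*a^2 ≤ (1.2:ℝ) := by nlinarith
  refine ⟨hC1, hC2, ?_⟩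
  nlinarith [mul_nonneg (by linarith : (0:ℝ) ≤ (-(v/3+1) + (v/2+1)*a) + 0.3)
    (by linarith : (0:ℝ) ≤ -(0.1:ℝ) - (-(v/3+1) + (v/2+1)*a)), hC1]

set_option maxHeartbeats 1000000 in
lemma aux_wt (v w t : ℝ) (hv1 : (1.72:ℝ) ≤ v) (hv2 : v ≤ 1.75)
    (hne : v^2 - 3 ≠ 0)
    (hwdef : w = 2*v/(v+3)) (htdef : t = 3*(v^2-3)^2/(v+3)^3) :
    0 < t ∧ t ≤ (0.0002:ℝ) ∧ (0.72:ℝ) ≤ w ∧ w ≤ (0.745:ℝ) ∧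
    t*(v+3)^3 = 3*(v^2-3)^2 ∧ (v+3)*w = 2*v := by
  have hv3 : (0:ℝ) < v + 3 := by linarith
  have ht0 : 0 < t := by rw [htdef]; positivity
  have htv : t * (v+3)^3 = 3*(v^2-3)^2 := by rw [htdef]; field_simp
  have hvsq1 : (2.95:ℝ) ≤ v^2 := by nlinarith
  have hvsq2 : v^2 ≤ (3.0625:ℝ) := by nlinarith
  have hsqsmall : (v^2-3)^2 ≤ (0.004:ℝ) := by
    nlinarith [mul_nonneg (by linarith : (0:ℝ) ≤ v^2-3+0.05) (by linarith : (0:ℝ) ≤ 3.0625 - v^2)]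
  have hcube : (100:ℝ) ≤ (v+3)^3 := by nlinarith
  refine ⟨ht0, ?_, ?_, ?_, htv, ?_⟩
  · nlinarith [htv, mul_nonneg ht0.le (by linarith : (0:ℝ) ≤ (v+3)^3 - 100)]
  · rw [hwdef, le_div_iff₀ hv3]; nlinarith
  · rw [hwdef, div_le_iff₀ hv3]; nlinarith
  · rw [hwdef]; field_simp

set_option maxHeartbeats 1000000 in
lemma aux_G (v w t : ℝ) (hv1 : (1.72:ℝ) ≤ v) (hv2 : v ≤ 1.75)
    (ht0 : 0 < t) (htub : t ≤ (0.0002:ℝ)) (hwlb : (0.72:ℝ) ≤ w) (hwub : w ≤ (0.745:ℝ)) :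
    (1.2:ℝ) ≤ (v/2+1)*(3*w^2 - 3*w*t + t^2) - (v/3+1)*(2*w - t) + 2*v/3 := by
  have hw2 : (0.518:ℝ) ≤ w^2 := by nlinarith
  have hA : (2.79:ℝ) ≤ (v/2+1)*(3*w^2) := by nlinarith
  have hBt : (v/2+1)*(3*w*t) ≤ (0.001:ℝ) := by nlinarith [ht0.le]
  have hCw : (v/3+1)*(2*w) ≤ (2.36:ℝ) := by nlinarith
  have h1 : 0 ≤ (v/2+1)*t^2 := by positivity
  have h2 : 0 ≤ (v/3+1)*t := by nlinarith [ht0.le]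
  nlinarith [hA, hBt, hCw, h1, h2]

set_option maxHeartbeats 1000000 in
lemma aux_final (v w t a m : ℝ) (hv1 : (1.72:ℝ) ≤ v) (hv2 : v ≤ 1.75)
    (ha1 : (0.71:ℝ) ≤ a) (ha2 : a ≤ 0.745) (hm0 : 0 ≤ m)
    (h2v : (v+3)*w = 2*v) (hαlt : a < w) (hαgt : w - t < a) (ht0 : 0 < t)
    (htv : t*(v+3)^3 = 3*(v^2-3)^2)
    (hmsq : m^2 - a^2 = (2*v - (v+3)*a)*(2/(3*(v+2))))
    (hm2lb : (0.42:ℝ) ≤ m^2) :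
    a < m ∧ m - a ≤ (v^2 - 3)^2 := by
  have hv3 : (0:ℝ) < v + 3 := by linarith
  have hwαpos : 0 < 2*v - (v+3)*a := by
    nlinarith [mul_lt_mul_of_pos_left hαlt hv3]
  have hp : (0:ℝ) < 2/(3*(v+2)) := by positivity
  have hq : 0 < m^2 - a^2 := by rw [hmsq]; exact mul_pos hwαpos hp
  have hmgt : a < m := by nlinarith [hq, hm0, ha1]
  have hub2 : 2*v - (v+3)*a ≤ (v+3)*t := by
    nlinarith [mul_lt_mul_of_pos_left hαgt hv3]
  have hsum : (1:ℝ) ≤ m + a := by nlinarith [hm2lb, hm0]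
  have hstep : m - a ≤ m^2 - a^2 := by nlinarith [hmgt, hsum]
  have h6 : m^2 - a^2 ≤ ((v+3)*t)*(2/(3*(v+2))) := by
    rw [hmsq]; nlinarith [mul_le_mul_of_nonneg_right hub2 hp.le]
  have hc2 : (22:ℝ) ≤ (v+3)^2 := by nlinarith
  have hu0 : (0:ℝ) ≤ (v+3)*t := mul_nonneg (by linarith) ht0.le
  have hfac : (2:ℝ) ≤ (v+2)*(v+3)^2 := by nlinarith [hc2]
  have h7' : 2*((v+3)*t) ≤ ((v+2)*(v+3)^2)*((v+3)*t) :=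
    mul_le_mul_of_nonneg_right hfac hu0
  have htv3 : (v+2)*(t*(v+3)^3) = (v+2)*(3*(v^2-3)^2) := by rw [htv]
  have h7 : ((v+3)*t)*(2/(3*(v+2))) ≤ (v^2 - 3)^2 := by
    rw [show ((v+3)*t)*(2/(3*(v+2))) = (2*((v+3)*t))/(3*(v+2)) by ring,
      div_le_iff₀ (by linarith : (0:ℝ) < 3*(v+2))]
    linarith [h7', htv3]
  exact ⟨hmgt, by linarith⟩

set_option maxHeartbeats 1000000 in
lemma key (v : ℝ) (hv1 : (1.72:ℝ) ≤ v) (hv2 : v ≤ (1.75:ℝ)) (h3 : v^2 ≠ 3) :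
    ∃ α β : ℂ,
      (-(α ^ 2) / 3 + α ^ 3 / 2 + 2 * α / 3 - 1) * (v : ℂ) + α ^ 3 - α ^ 2 + 1 = 0 ∧
      (-(β ^ 2) / 3 + β ^ 3 / 2 + 2 * β / 3 - 1) * (v : ℂ) + β ^ 3 - β ^ 2 + 1 = 0 ∧
      α ≠ 0 ∧ β ≠ 0 ∧
      0 < |‖α‖ - ‖β‖| ∧
      |‖α‖ - ‖β‖| ≤ (v^2 - 3)^2 := by
  have hv3 : (0:ℝ) < v + 3 := by linarith
  have hne : v^2 - 3 ≠ 0 := sub_ne_zero.mpr h3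
  obtain ⟨w, hwdef⟩ : ∃ w : ℝ, w = 2*v/(v+3) := ⟨_, rfl⟩
  obtain ⟨t, htdef⟩ : ∃ t : ℝ, t = 3*(v^2-3)^2/(v+3)^3 := ⟨_, rfl⟩
  obtain ⟨ht0, htub, hwlb, hwub, htv, h2v⟩ := aux_wt v w t hv1 hv2 hne hwdef htdef
  have hfw : (-(w^2)/3 + w^3/2 + 2*w/3 - 1)*v + w^3 - w^2 + 1 = t := by
    rw [hwdef, htdef]; field_simp; ring
  have hGlb := aux_G v w t hv1 hv2 ht0 htub hwlb hwub
  have hfwt : (-((w-t)^2)/3 + (w-t)^3/2 + 2*(w-t)/3 - 1)*v + (w-t)^3 - (w-t)^2 + 1 < 0 := by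
    have hexpand : (-((w-t)^2)/3 + (w-t)^3/2 + 2*(w-t)/3 - 1)*v + (w-t)^3 - (w-t)^2 + 1
        = ((-(w^2)/3 + w^3/2 + 2*w/3 - 1)*v + w^3 - w^2 + 1)
          - t*((v/2+1)*(3*w^2 - 3*w*t + t^2) - (v/3+1)*(2*w - t) + 2*v/3) := by ring
    rw [hexpand, hfw]; nlinarith [ht0, hGlb]
  have hcont : Continuous (fun x : ℝ => (-(x^2)/3 + x^3/2 + 2*x/3 - 1)*v + x^3 - x^2 + 1) := by
    fun_prop
  have hwt : w - t ≤ w := by linarith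
  have h0mem : (0:ℝ) ∈ Set.Icc
      ((fun x : ℝ => (-(x^2)/3 + x^3/2 + 2*x/3 - 1)*v + x^3 - x^2 + 1) (w - t))
      ((fun x : ℝ => (-(x^2)/3 + x^3/2 + 2*x/3 - 1)*v + x^3 - x^2 + 1) w) := by
    constructor
    · exact le_of_lt hfwt
    · show (0:ℝ) ≤ (-(w^2)/3 + w^3/2 + 2*w/3 - 1)*v + w^3 - w^2 + 1
      rw [hfw]; exact ht0.le
  obtain ⟨αr, hαmem, hαroot⟩ := intermediate_value_Icc hwt hcont.continuousOn h0mem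
  obtain ⟨hα1, hα2⟩ := hαmem
  have hfα : (-(αr^2)/3 + αr^3/2 + 2*αr/3 - 1)*v + αr^3 - αr^2 + 1 = 0 := hαroot
  have hαlt : αr < w := by
    rcases lt_or_eq_of_le hα2 with h | h
    · exact h
    · exfalso; rw [h] at hfα; rw [hfα] at hfw; exact ht0.ne hfw
  have hαgt : w - t < αr := by
    rcases lt_or_eq_of_le hα1 with h | h
    · exact h
    · exfalso; rw [← h] at hfα; rw [hfα] at hfwt; exact lt_irrefl 0 hfwt
  have hαlb : (0.71:ℝ) ≤ αr := by linarith
  have hαub : αr ≤ (0.745:ℝ) := by linarith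
  have ha3 : (0:ℝ) < v/2+1 := by linarith
  obtain ⟨hC1, hC2ub, hD⟩ := aux_quad v αr hv1 hv2 hαlb hαub
  obtain ⟨β, hβq, hβim, hβabs⟩ :=
    quad_root (v/2+1) (-(v/3+1) + (v/2+1)*αr) (2*v/3 - (v/3+1)*αr + (v/2+1)*αr^2) ha3 hD
  have hαC : (-((αr:ℂ))^2/3 + (αr:ℂ)^3/2 + 2*(αr:ℂ)/3 - 1)*(v:ℂ) + (αr:ℂ)^3 - (αr:ℂ)^2 + 1 = 0 := by
    exact_mod_cast hfα
  have habsα : ‖((αr:ℝ):ℂ)‖ = αr := by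
    rw [Complex.norm_real, Real.norm_eq_abs, abs_of_pos (by linarith)]
  have hm0 : 0 ≤ ‖β‖ := norm_nonneg β
  have hmsq : (‖β‖)^2 - αr^2 = (2*v - (v+3)*αr)*(2/(3*(v+2))) := by
    rw [hβabs]; field_simp; ring
  have hm2lb : (0.42:ℝ) ≤ (‖β‖)^2 := by
    rw [hβabs, le_div_iff₀ ha3]; nlinarith [hC1]
  obtain ⟨hmgt, hmbd⟩ := aux_final v w t αr (‖β‖) hv1 hv2 hαlb hαub hm0
    h2v hαlt hαgt ht0 htv hmsq hm2lb
  refine ⟨(αr:ℂ), β, by exact_mod_cast hfα, ?_, ?_, ?_, ?_, ?_⟩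
  · push_cast at hβq
    linear_combination (β - (αr:ℂ)) * hβq + hαC
  · exact Complex.ofReal_ne_zero.mpr (by linarith)
  · intro h; exact hβim (by rw [h]; simp)
  · rw [habsα, abs_sub_comm, abs_of_pos (by linarith)]
    linarith
  · rw [habsα, abs_sub_comm, abs_of_pos (by linarith)]
    linarith


set_option maxHeartbeats 1000000 in
/-- Convergents `p/q` of the continued fraction of `√3` satisfy
`ε := |p/q − √3| < 1/q²`; consequently the cubic `P_q(X) = 6q·P(X, p/q)`,
where `P(X,Y) = (-X²/3 + X³/2 + 2X/3 − 1)Y + X³ − X² + 1`, has height `O(q)`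
and two nonzero roots `α, β` with `0 < ||α| − |β|| = O(q⁻⁴)`. -/
theorem convergents_sqrt3_cubic_abs_sep :
    (∀ n : ℕ,
      |(GenContFract.of (Real.sqrt 3)).convs n - Real.sqrt 3| <
        1 / ((GenContFract.of (Real.sqrt 3)).dens n) ^ 2) ∧
    ∃ C : ℝ, 0 < C ∧ ∃ N : ℕ, ∀ n : ℕ, N ≤ n →
      (let v := (GenContFract.of (Real.sqrt 3)).convs n
       let q := (GenContFract.of (Real.sqrt 3)).dens n
       (|6 * q * (v / 2 + 1)| ≤ C * q ∧ |6 * q * (-(v / 3) - 1)| ≤ C * q ∧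
        |6 * q * (2 * v / 3)| ≤ C * q ∧ |6 * q * (1 - v)| ≤ C * q) ∧
       ∃ α β : ℂ,
         (-(α ^ 2) / 3 + α ^ 3 / 2 + 2 * α / 3 - 1) * (v : ℂ)
             + α ^ 3 - α ^ 2 + 1 = 0 ∧
         (-(β ^ 2) / 3 + β ^ 3 / 2 + 2 * β / 3 - 1) * (v : ℂ)
             + β ^ 3 - β ^ 2 + 1 = 0 ∧
         α ≠ 0 ∧ β ≠ 0 ∧
         0 < |‖α‖ - ‖β‖| ∧
         |‖α‖ - ‖β‖| ≤ C / q ^ 4) := by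
  have hirr : Irrational (Real.sqrt 3) := by
    simpa using (Nat.prime_three).irrational_sqrt
  have notTerm : ∀ n : ℕ, ¬(GenContFract.of (Real.sqrt 3)).TerminatedAt n := by
    intro n h
    obtain ⟨q, hq⟩ := GenContFract.exists_rat_eq_of_terminates ⟨n, h⟩
    exact hirr ⟨q, hq.symm⟩
  have hq1 : ∀ n : ℕ, (1:ℝ) ≤ (GenContFract.of (Real.sqrt 3)).dens n := by
    intro n
    have h := GenContFract.succ_nth_fib_le_of_nth_den (v := Real.sqrt 3) (n := n)
      (Or.inr (notTerm _))
    have : (1:ℝ) ≤ (Nat.fib (n+1) : ℝ) := by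
      exact_mod_cast Nat.fib_pos.mpr (Nat.succ_pos n)
    linarith
  have hpart1 : ∀ n : ℕ,
      |(GenContFract.of (Real.sqrt 3)).convs n - Real.sqrt 3| <
        1 / ((GenContFract.of (Real.sqrt 3)).dens n) ^ 2 := by
    intro n
    have h1 := GenContFract.abs_sub_convs_le (notTerm n)
    have hm := GenContFract.of_den_mono (v := Real.sqrt 3) (n := n)
    have hqn := hq1 n
    have hqn1 := hq1 (n+1)
    have h2 : 1 / ((GenContFract.of (Real.sqrt 3)).dens n *
        (GenContFract.of (Real.sqrt 3)).dens (n+1)) ≤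
        1 / ((GenContFract.of (Real.sqrt 3)).dens n) ^ 2 := by
      apply one_div_le_one_div_of_le
      · nlinarith
      · nlinarith
    have hle : |(GenContFract.of (Real.sqrt 3)).convs n - Real.sqrt 3| ≤
        1 / ((GenContFract.of (Real.sqrt 3)).dens n) ^ 2 := by
      rw [abs_sub_comm]; exact h1.trans h2
    rcases lt_or_eq_of_le hle with h | heq
    · exact h
    · exfalso
      obtain ⟨c, hc⟩ := GenContFract.exists_rat_eq_nth_conv (Real.sqrt 3) n
      obtain ⟨d, hd⟩ := GenContFract.exists_rat_eq_nth_den (Real.sqrt 3) n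
      rw [hc, hd] at heq
      rcases abs_cases ((GenContFract.of (Real.sqrt 3)).convs n - Real.sqrt 3) with ⟨h, _⟩ | ⟨h, _⟩
      · rw [hc] at h
        apply hirr ⟨c - 1/d^2, ?_⟩
        push_cast
        linarith [heq ▸ h]
      · rw [hc] at h
        apply hirr ⟨c + 1/d^2, ?_⟩
        push_cast
        linarith [heq ▸ h]
  refine ⟨hpart1, 100, by norm_num, ?_⟩
  obtain ⟨N, hN⟩ := GenContFract.of_convergence_epsilon (Real.sqrt 3) 0.01 (by norm_num)
  refine ⟨N, ?_⟩
  intro n hn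
  have hdist := hN n hn
  rw [abs_sub_comm] at hdist
  have hS1 : (1.73:ℝ) < Real.sqrt 3 := by
    rw [Real.lt_sqrt (by norm_num)]; norm_num
  have hS2 : Real.sqrt 3 < (1.74:ℝ) := by
    rw [Real.sqrt_lt' (by norm_num)]; norm_num
  obtain ⟨hd1, hd2⟩ := abs_lt.mp hdist
  have hv1 : (1.72:ℝ) ≤ (GenContFract.of (Real.sqrt 3)).convs n := by linarith
  have hv2 : (GenContFract.of (Real.sqrt 3)).convs n ≤ (1.75:ℝ) := by linarith
  have hqn := hq1 n
  have hq0 : (0:ℝ) < (GenContFract.of (Real.sqrt 3)).dens n := by linarith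
  have hsq3 : ((GenContFract.of (Real.sqrt 3)).convs n)^2 ≠ 3 := by
    intro h
    obtain ⟨c, hc⟩ := GenContFract.exists_rat_eq_nth_conv (Real.sqrt 3) n
    have hv0 : (0:ℝ) ≤ (GenContFract.of (Real.sqrt 3)).convs n := by linarith
    have hseq : Real.sqrt 3 = (GenContFract.of (Real.sqrt 3)).convs n :=
      (congrArg Real.sqrt h).symm.trans (Real.sqrt_sq hv0)
    exact hirr ⟨c, by rw [← hc]; exact hseq.symm⟩
  dsimp only
  constructor
  · refine ⟨?_, ?_, ?_, ?_⟩
    · rw [abs_of_pos (by nlinarith)]; nlinarith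
    · rw [abs_of_neg (by nlinarith)]; nlinarith
    · rw [abs_of_pos (by nlinarith)]; nlinarith
    · rw [abs_of_neg (by nlinarith)]; nlinarith
  · obtain ⟨α, β, h1, h2, h3, h4, h5, h6⟩ := key ((GenContFract.of (Real.sqrt 3)).convs n)
      hv1 hv2 hsq3
    refine ⟨α, β, h1, h2, h3, h4, h5, ?_⟩
    refine h6.trans ?_
    have hSsq : Real.sqrt 3 ^ 2 = 3 := Real.sq_sqrt (by norm_num)
    have h5' : |(GenContFract.of (Real.sqrt 3)).convs n - Real.sqrt 3| ≤
        1 / ((GenContFract.of (Real.sqrt 3)).dens n) ^ 2 := (hpart1 n).le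
    have h7 : ((GenContFract.of (Real.sqrt 3)).convs n - Real.sqrt 3)^2 ≤
        (1 / ((GenContFract.of (Real.sqrt 3)).dens n) ^ 2)^2 := by
      have := pow_le_pow_left₀ (abs_nonneg _) h5' 2
      simpa [sq_abs] using this
    have h8 : ((GenContFract.of (Real.sqrt 3)).convs n + Real.sqrt 3)^2 ≤ (12.25:ℝ) := by
      nlinarith
    calc (((GenContFract.of (Real.sqrt 3)).convs n)^2 - 3)^2
        = ((GenContFract.of (Real.sqrt 3)).convs n - Real.sqrt 3)^2 *
          ((GenContFract.of (Real.sqrt 3)).convs n + Real.sqrt 3)^2 := by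
          linear_combination (2*((GenContFract.of (Real.sqrt 3)).convs n)^2 - Real.sqrt 3 ^ 2 - 3) * hSsq
      _ ≤ (1 / ((GenContFract.of (Real.sqrt 3)).dens n) ^ 2)^2 * 12.25 :=
          mul_le_mul h7 h8 (sq_nonneg _) (by positivity)
      _ = 12.25 / ((GenContFract.of (Real.sqrt 3)).dens n) ^ 4 := by
          rw [div_pow]; ring
      _ ≤ 100 / ((GenContFract.of (Real.sqrt 3)).dens n) ^ 4 := by
          gcongr <;> norm_num
end

section
/- For the degree-4 polynomial P_M(X) = M(X⁴ − 1) − (X³ − X² + X − 5) with M a positive integer tending to infinity, the root z_1 near 1 satisfies z_1 = 1 − 1/M − 2/M² − 11/(2M³) − 71/(4M⁴) + O(1/M⁵), the root z_i near i satisfies z_i = i − i/M − (1+4i)/(2M²) − (4+11i)/(2M³) − (66+143i)/(8M⁴) + O(1/M⁵), and |z_1| − |z_i| = O(1/M⁵) while being nonzero for large M; hence the absolute separation of P_M is O(H(P_M)^{-5}) with H(P_M) = M. -/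
set_option maxHeartbeats 1000000

noncomputable def Complex.abs : AbsoluteValue ℂ ℝ := NormedField.toAbsoluteValue ℂ

lemma Complex.abs_apply (z : ℂ) : Complex.abs z = ‖z‖ := rfl

lemma Complex.abs_ofReal (r : ℝ) : Complex.abs (r:ℂ) = |r| := by
  rw [Complex.abs_apply, Complex.norm_real, Real.norm_eq_abs]

lemma Complex.abs_natCast (n : ℕ) : Complex.abs (n:ℂ) = n := by
  rw [Complex.abs_apply, Complex.norm_natCast]

lemma Complex.abs_two : Complex.abs 2 = 2 := by
  rw [Complex.abs_apply]; norm_num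

lemma Complex.abs_I : Complex.abs Complex.I = 1 := by
  rw [Complex.abs_apply, Complex.norm_I]

lemma Complex.sq_abs (z : ℂ) : Complex.abs z ^ 2 = Complex.normSq z := by
  rw [Complex.abs_apply, Complex.sq_norm]

lemma cdist_eq (z w : ℂ) : dist z w = Complex.abs (z - w) := by
  rw [Complex.abs_apply, Complex.dist_eq]

open Metric in
lemma key_root (M : ℕ) (hM : (32:ℝ) ≤ M) (c : ℂ) (D : ℂ → ℂ)
    (hD : ∀ z : ℂ, (z - c) * D z + 4 = (M:ℂ) * (z^4 - 1) - (z^3 - z^2 + z - 5))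
    (hDlow : ∀ z ∈ closedBall c (2 / (M:ℝ)), 2*(M:ℝ) ≤ Complex.abs (D z))
    (hDlip : ∀ z ∈ closedBall c (2 / (M:ℝ)), ∀ w ∈ closedBall c (2 / (M:ℝ)),
      Complex.abs (D z - D w) ≤ 16*(M:ℝ)*Complex.abs (z - w))
    (a : ℂ) (ha : a ∈ closedBall c (2 / (M:ℝ))) :
    ∃ z : ℂ, (M:ℂ) * (z^4 - 1) - (z^3 - z^2 + z - 5) = 0 ∧
      z ∈ closedBall c (2 / (M:ℝ)) ∧
      Complex.abs (z - a) ≤ Complex.abs ((M:ℂ) * (a^4 - 1) - (a^3 - a^2 + a - 5)) / M := by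
  have hM0 : (0:ℝ) < M := by linarith
  set s : Set ℂ := closedBall c (2 / (M:ℝ)) with hs
  set f : ℂ → ℂ := fun z => c - 4 / D z with hf
  have hDne : ∀ z ∈ s, D z ≠ 0 := by
    intro z hz
    have h1 := hDlow z hz
    intro h; rw [h] at h1; simp at h1; linarith
  have hmaps : Set.MapsTo f s s := by
    intro z hz
    have h1 := hDlow z hz
    have h2 : Complex.abs (f z - c) = 4 / Complex.abs (D z) := by
      have h3 : f z - c = -(4 / D z) := by simp only [hf]; ring
      rw [h3, AbsoluteValue.map_neg, map_div₀]
      simp [Complex.abs_apply]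
    simp only [hs, mem_closedBall, cdist_eq]
    rw [h2, div_le_div_iff₀ (by linarith) hM0]
    linarith
  have hlip : ∀ z ∈ s, ∀ w ∈ s, Complex.abs (f z - f w) ≤ (1/2) * Complex.abs (z - w) := by
    intro z hz w hw
    have hz0 := hDne z hz; have hw0 := hDne w hw
    have h1 : f z - f w = 4 * (D z - D w) / (D z * D w) := by
      simp only [hf]; field_simp <;> ring
    rw [h1, map_div₀, map_mul, map_mul]
    have h2 := hDlip z hz w hw
    have h3 := hDlow z hz; have h4 := hDlow w hw
    have habs4 : Complex.abs 4 = 4 := by simp [Complex.abs_apply]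
    have hzw : (0:ℝ) ≤ Complex.abs (z - w) := Complex.abs.nonneg _
    have hDD : 4*(M:ℝ)*(M:ℝ) ≤ Complex.abs (D z) * Complex.abs (D w) := by nlinarith
    rw [habs4, div_le_iff₀ (by nlinarith)]
    calc 4 * Complex.abs (D z - D w) ≤ 4 * (16*(M:ℝ)*Complex.abs (z - w)) := by linarith
      _ ≤ (1/2) * Complex.abs (z - w) * (4*(M:ℝ)*(M:ℝ)) := by nlinarith [mul_nonneg (mul_nonneg (by linarith : (0:ℝ) ≤ (M:ℝ) - 32) (by linarith : (0:ℝ) ≤ (M:ℝ))) hzw]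
      _ ≤ (1/2) * Complex.abs (z - w) * (Complex.abs (D z) * Complex.abs (D w)) := by
          have := mul_le_mul_of_nonneg_left hDD (by positivity : (0:ℝ) ≤ (1/2) * Complex.abs (z - w))
          linarith
  have hcon : ContractingWith (1/2 : NNReal) (hmaps.restrict f s s) := by
    refine ⟨?_, ?_⟩
    · rw [← NNReal.coe_lt_coe]; push_cast; norm_num
    · apply LipschitzWith.of_dist_le_mul
      rintro ⟨z, hz⟩ ⟨w, hw⟩
      have h5 := hlip z hz w hw
      simp only [Subtype.dist_eq, Set.MapsTo.val_restrict_apply, cdist_eq]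
      have hK : ((1/2 : NNReal) : ℝ) = 1/2 := by norm_num
      rw [hK]
      exact h5
  obtain ⟨y, hys, hfix, -, -⟩ :=
    hcon.exists_fixedPoint' (Metric.isClosed_closedBall.isComplete) hmaps ha (edist_ne_top _ _)
  have hy0 := hDne y hys
  have hroot : (M:ℂ) * (y^4 - 1) - (y^3 - y^2 + y - 5) = 0 := by
    have h1 : f y = y := hfix
    have h2 : (y - c) * D y + 4 = 0 := by
      simp only [hf] at h1
      field_simp at h1
      linear_combination -h1
    rw [← hD y]; exact h2
  refine ⟨y, hroot, hys, ?_⟩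
  have hstep : Complex.abs (y - a) ≤ Complex.abs (a - f a) + (1/2) * Complex.abs (y - a) := by
    have h1 : y - a = (f y - f a) + -(a - f a) := by rw [hfix]; ring
    have h2 : Complex.abs (y - a) ≤ Complex.abs (f y - f a) + Complex.abs (a - f a) := by
      rw [h1]
      refine (Complex.abs.add_le _ _).trans ?_
      rw [AbsoluteValue.map_neg]
    have h3 := hlip y hys a ha
    linarith
  have hkey : Complex.abs (y - a) ≤ 2 * Complex.abs (a - f a) := by linarith
  have ha0 := hDne a ha
  have hfa : Complex.abs (a - f a) = Complex.abs ((a - c) * D a + 4) / Complex.abs (D a) := by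
    rw [← map_div₀]
    congr 1
    simp only [hf]
    field_simp
    ring
  have hDa := hDlow a ha
  rw [hD a] at hfa
  rw [hfa] at hkey
  refine hkey.trans ?_
  have hQ := Complex.abs.nonneg ((M:ℂ) * (a^4 - 1) - (a^3 - a^2 + a - 5))
  have h7 : (0:ℝ) < Complex.abs (D a) := by nlinarith
  rw [mul_div_assoc', div_le_div_iff₀ h7 hM0]
  nlinarith [mul_le_mul_of_nonneg_left hDa hQ]


lemma horner_step {U c r : ℂ} {bc br : ℝ} (hU : Complex.abs U ≤ 1)
    (hc : Complex.abs c ≤ bc) (hr : Complex.abs r ≤ br) :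
    Complex.abs (c + U * r) ≤ bc + br := by
  have h1 : Complex.abs (c + U * r) ≤ Complex.abs c + Complex.abs U * Complex.abs r := by
    rw [← map_mul]; exact Complex.abs.add_le _ _
  nlinarith [Complex.abs.nonneg r, Complex.abs.nonneg U]

lemma real_abs_le (x b : ℝ) (h1 : -b ≤ x) (h2 : x ≤ b) : Complex.abs ((x:ℝ):ℂ) ≤ b := by
  rw [Complex.abs_ofReal]; exact abs_le.mpr ⟨h1, h2⟩

lemma coeff_abs_le (x y bx byy : ℝ) (hx1 : -bx ≤ x) (hx2 : x ≤ bx) (hy1 : -byy ≤ y)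
    (hy2 : y ≤ byy) : Complex.abs (((x:ℝ):ℂ) + ((y:ℝ):ℂ) * Complex.I) ≤ bx + byy := by
  refine (Complex.abs.add_le _ _).trans ?_
  rw [map_mul, Complex.abs_ofReal, Complex.abs_ofReal, Complex.abs_I, mul_one]
  have h1 : |x| ≤ bx := abs_le.mpr ⟨hx1, hx2⟩
  have h2 : |y| ≤ byy := abs_le.mpr ⟨hy1, hy2⟩
  linarith

noncomputable def Aexp (U : ℂ) : ℂ :=
  1 - U - ((2:ℝ):ℂ)*U^2 - ((11/2:ℝ):ℂ)*U^3 - ((71/4:ℝ):ℂ)*U^4 - ((501/8:ℝ):ℂ)*U^5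

noncomputable def Bexp (U : ℂ) : ℂ :=
  Complex.I - Complex.I*U - (((1/2:ℝ):ℂ) + ((2:ℝ):ℂ)*Complex.I)*U^2
    - (((2:ℝ):ℂ) + ((11/2:ℝ):ℂ)*Complex.I)*U^3
    - (((33/4:ℝ):ℂ) + ((143/8:ℝ):ℂ)*Complex.I)*U^4
    - (((71/2:ℝ):ℂ) + ((505/8:ℝ):ℂ)*Complex.I)*U^5

noncomputable def Are (u : ℝ) : ℝ := 1 - u - 2*u^2 - (11/2)*u^3 - (71/4)*u^4 - (501/8)*u^5
noncomputable def Bre (u : ℝ) : ℝ := -(1/2)*u^2 - 2*u^3 - (33/4)*u^4 - (71/2)*u^5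
noncomputable def Bim (u : ℝ) : ℝ := 1 - u - 2*u^2 - (11/2)*u^3 - (143/8)*u^4 - (505/8)*u^5
noncomputable def Spoly (u : ℝ) : ℝ :=
  -(5/4) - (55/4)*u - (575/8)*u^2 - (14081/64)*u^3 - (19817/32)*u^4 - (10585/8)*u^5

noncomputable def RA14 (_ : ℂ) : ℂ := (((63001502001/4096 : ℝ) : ℂ))

noncomputable def RA13 (U : ℂ) : ℂ := (((8928356571/512 : ℝ) : ℂ)) + U * RA14 U

noncomputable def RA12 (U : ℂ) : ℂ := (((6562421145/512 : ℝ) : ℂ)) + U * RA13 U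

noncomputable def RA11 (U : ℂ) : ℂ := (((254727939/32 : ℝ) : ℂ)) + U * RA12 U

noncomputable def RA10 (U : ℂ) : ℂ := (((2566188551/512 : ℝ) : ℂ)) + U * RA11 U

noncomputable def RA9 (U : ℂ) : ℂ := (((404361911/256 : ℝ) : ℂ)) + U * RA10 U

noncomputable def RA8 (U : ℂ) : ℂ := (((20181817/64 : ℝ) : ℂ)) + U * RA9 U

noncomputable def RA7 (U : ℂ) : ℂ := (((-919017/64 : ℝ) : ℂ)) + U * RA8 U

noncomputable def RA6 (U : ℂ) : ℂ := (((-4411375/64 : ℝ) : ℂ)) + U * RA7 U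

noncomputable def RA5 (U : ℂ) : ℂ := (((-2738819/32 : ℝ) : ℂ)) + U * RA6 U

noncomputable def RA4 (U : ℂ) : ℂ := (((-555351/32 : ℝ) : ℂ)) + U * RA5 U

noncomputable def RA3 (U : ℂ) : ℂ := (((-11653/4 : ℝ) : ℂ)) + U * RA4 U

noncomputable def RA2 (U : ℂ) : ℂ := (((-397/4 : ℝ) : ℂ)) + U * RA3 U

noncomputable def RA1 (U : ℂ) : ℂ := (((1413/4 : ℝ) : ℂ)) + U * RA2 U

noncomputable def RA0 (U : ℂ) : ℂ := (((3739/4 : ℝ) : ℂ)) + U * RA1 U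

lemma RA14_bound {U : ℂ} (_ : Complex.abs U ≤ 1) :
    Complex.abs (RA14 U) ≤ (63001502001/4096 : ℝ) := by
  unfold RA14
  exact le_trans (real_abs_le (63001502001/4096 : ℝ) (63001502001/4096 : ℝ) (by norm_num) (by norm_num)) (by norm_num)

lemma RA13_bound {U : ℂ} (hU : Complex.abs U ≤ 1) :
    Complex.abs (RA13 U) ≤ (134428354569/4096 : ℝ) := by
  unfold RA13
  exact le_trans (horner_step hU (real_abs_le (8928356571/512 : ℝ) (8928356571/512 : ℝ) (by norm_num) (by norm_num)) (RA14_bound hU)) (by norm_num)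

lemma RA12_bound {U : ℂ} (hU : Complex.abs U ≤ 1) :
    Complex.abs (RA12 U) ≤ (186927723729/4096 : ℝ) := by
  unfold RA12
  exact le_trans (horner_step hU (real_abs_le (6562421145/512 : ℝ) (6562421145/512 : ℝ) (by norm_num) (by norm_num)) (RA13_bound hU)) (by norm_num)

lemma RA11_bound {U : ℂ} (hU : Complex.abs U ≤ 1) :
    Complex.abs (RA11 U) ≤ (219532899921/4096 : ℝ) := by
  unfold RA11
  exact le_trans (horner_step hU (real_abs_le (254727939/32 : ℝ) (254727939/32 : ℝ) (by norm_num) (by norm_num)) (RA12_bound hU)) (by norm_num)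

lemma RA10_bound {U : ℂ} (hU : Complex.abs U ≤ 1) :
    Complex.abs (RA10 U) ≤ (240062408329/4096 : ℝ) := by
  unfold RA10
  exact le_trans (horner_step hU (real_abs_le (2566188551/512 : ℝ) (2566188551/512 : ℝ) (by norm_num) (by norm_num)) (RA11_bound hU)) (by norm_num)

lemma RA9_bound {U : ℂ} (hU : Complex.abs U ≤ 1) :
    Complex.abs (RA9 U) ≤ (246532198905/4096 : ℝ) := by
  unfold RA9
  exact le_trans (horner_step hU (real_abs_le (404361911/256 : ℝ) (404361911/256 : ℝ) (by norm_num) (by norm_num)) (RA10_bound hU)) (by norm_num)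

lemma RA8_bound {U : ℂ} (hU : Complex.abs U ≤ 1) :
    Complex.abs (RA8 U) ≤ (247823835193/4096 : ℝ) := by
  unfold RA8
  exact le_trans (horner_step hU (real_abs_le (20181817/64 : ℝ) (20181817/64 : ℝ) (by norm_num) (by norm_num)) (RA9_bound hU)) (by norm_num)

lemma RA7_bound {U : ℂ} (hU : Complex.abs U ≤ 1) :
    Complex.abs (RA7 U) ≤ (247882652281/4096 : ℝ) := by
  unfold RA7
  exact le_trans (horner_step hU (real_abs_le (-919017/64 : ℝ) (919017/64 : ℝ) (by norm_num) (by norm_num)) (RA8_bound hU)) (by norm_num)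

lemma RA6_bound {U : ℂ} (hU : Complex.abs U ≤ 1) :
    Complex.abs (RA6 U) ≤ (248164980281/4096 : ℝ) := by
  unfold RA6
  exact le_trans (horner_step hU (real_abs_le (-4411375/64 : ℝ) (4411375/64 : ℝ) (by norm_num) (by norm_num)) (RA7_bound hU)) (by norm_num)

lemma RA5_bound {U : ℂ} (hU : Complex.abs U ≤ 1) :
    Complex.abs (RA5 U) ≤ (248515549113/4096 : ℝ) := by
  unfold RA5
  exact le_trans (horner_step hU (real_abs_le (-2738819/32 : ℝ) (2738819/32 : ℝ) (by norm_num) (by norm_num)) (RA6_bound hU)) (by norm_num)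

lemma RA4_bound {U : ℂ} (hU : Complex.abs U ≤ 1) :
    Complex.abs (RA4 U) ≤ (248586634041/4096 : ℝ) := by
  unfold RA4
  exact le_trans (horner_step hU (real_abs_le (-555351/32 : ℝ) (555351/32 : ℝ) (by norm_num) (by norm_num)) (RA5_bound hU)) (by norm_num)

lemma RA3_bound {U : ℂ} (hU : Complex.abs U ≤ 1) :
    Complex.abs (RA3 U) ≤ (248598566713/4096 : ℝ) := by
  unfold RA3
  exact le_trans (horner_step hU (real_abs_le (-11653/4 : ℝ) (11653/4 : ℝ) (by norm_num) (by norm_num)) (RA4_bound hU)) (by norm_num)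

lemma RA2_bound {U : ℂ} (hU : Complex.abs U ≤ 1) :
    Complex.abs (RA2 U) ≤ (248598973241/4096 : ℝ) := by
  unfold RA2
  exact le_trans (horner_step hU (real_abs_le (-397/4 : ℝ) (397/4 : ℝ) (by norm_num) (by norm_num)) (RA3_bound hU)) (by norm_num)

lemma RA1_bound {U : ℂ} (hU : Complex.abs U ≤ 1) :
    Complex.abs (RA1 U) ≤ (248600420153/4096 : ℝ) := by
  unfold RA1
  exact le_trans (horner_step hU (real_abs_le (1413/4 : ℝ) (1413/4 : ℝ) (by norm_num) (by norm_num)) (RA2_bound hU)) (by norm_num)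

lemma RA0_bound {U : ℂ} (hU : Complex.abs U ≤ 1) :
    Complex.abs (RA0 U) ≤ (248604248889/4096 : ℝ) := by
  unfold RA0
  exact le_trans (horner_step hU (real_abs_le (3739/4 : ℝ) (3739/4 : ℝ) (by norm_num) (by norm_num)) (RA1_bound hU)) (by norm_num)

noncomputable def RAh (U : ℂ) : ℂ := RA0 U

lemma RAh_bound {U : ℂ} (hU : Complex.abs U ≤ 1) : Complex.abs (RAh U) ≤ 2^28 := by
  unfold RAh
  exact le_trans (RA0_bound hU) (by norm_num)

noncomputable def RB14 (_ : ℂ) : ℂ := ((((-51872637439/4096 : ℝ) : ℂ)) + (((-6252000495/256 : ℝ) : ℂ)) * Complex.I)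

noncomputable def RB13 (U : ℂ) : ℂ := ((((-11885838481/1024 : ℝ) : ℂ)) + (((-14115407119/512 : ℝ) : ℂ)) * Complex.I) + U * RB14 U

noncomputable def RB12 (U : ℂ) : ℂ := ((((-13464561361/2048 : ℝ) : ℂ)) + (((-10259629215/512 : ℝ) : ℂ)) * Complex.I) + U * RB13 U

noncomputable def RB11 (U : ℂ) : ℂ := ((((-2936051401/1024 : ℝ) : ℂ)) + (((-6278648271/512 : ℝ) : ℂ)) * Complex.I) + U * RB12 U

noncomputable def RB10 (U : ℂ) : ℂ := ((((-4722726839/4096 : ℝ) : ℂ)) + (((-1849708327/256 : ℝ) : ℂ)) * Complex.I) + U * RB11 U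

noncomputable def RB9 (U : ℂ) : ℂ := ((((-44227583/128 : ℝ) : ℂ)) + (((-1004708679/512 : ℝ) : ℂ)) * Complex.I) + U * RB10 U

noncomputable def RB8 (U : ℂ) : ℂ := ((((-19520097/128 : ℝ) : ℂ)) + (((-123738721/512 : ℝ) : ℂ)) * Complex.I) + U * RB9 U

noncomputable def RB7 (U : ℂ) : ℂ := ((((-24905281/256 : ℝ) : ℂ)) + (((59369405/512 : ℝ) : ℂ)) * Complex.I) + U * RB8 U

noncomputable def RB6 (U : ℂ) : ℂ := ((((-2298415/32 : ℝ) : ℂ)) + (((16918755/128 : ℝ) : ℂ)) * Complex.I) + U * RB7 U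

noncomputable def RB5 (U : ℂ) : ℂ := ((((-6873165/128 : ℝ) : ℂ)) + (((7542509/64 : ℝ) : ℂ)) * Complex.I) + U * RB6 U

noncomputable def RB4 (U : ℂ) : ℂ := ((((-312979/32 : ℝ) : ℂ)) + (((1491839/64 : ℝ) : ℂ)) * Complex.I) + U * RB5 U

noncomputable def RB3 (U : ℂ) : ℂ := ((((-60365/64 : ℝ) : ℂ)) + (((264549/64 : ℝ) : ℂ)) * Complex.I) + U * RB4 U

noncomputable def RB2 (U : ℂ) : ℂ := ((((15713/32 : ℝ) : ℂ)) + (((3615/8 : ℝ) : ℂ)) * Complex.I) + U * RB3 U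

noncomputable def RB1 (U : ℂ) : ℂ := ((((615/1 : ℝ) : ℂ)) + (((-593/4 : ℝ) : ℂ)) * Complex.I) + U * RB2 U

noncomputable def RB0 (U : ℂ) : ℂ := ((((936/1 : ℝ) : ℂ)) + (((-1253/2 : ℝ) : ℂ)) * Complex.I) + U * RB1 U

lemma RB14_bound {U : ℂ} (_ : Complex.abs U ≤ 1) :
    Complex.abs (RB14 U) ≤ (151904645359/4096 : ℝ) := by
  unfold RB14
  exact le_trans (coeff_abs_le (-51872637439/4096 : ℝ) (-6252000495/256 : ℝ) (51872637439/4096 : ℝ) (6252000495/256 : ℝ) (by norm_num) (by norm_num) (by norm_num) (by norm_num)) (by norm_num)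

lemma RB13_bound {U : ℂ} (hU : Complex.abs U ≤ 1) :
    Complex.abs (RB13 U) ≤ (312371256235/4096 : ℝ) := by
  unfold RB13
  exact le_trans (horner_step hU (coeff_abs_le (-11885838481/1024 : ℝ) (-14115407119/512 : ℝ) (11885838481/1024 : ℝ) (14115407119/512 : ℝ) (by norm_num) (by norm_num) (by norm_num) (by norm_num)) (RB14_bound hU)) (by norm_num)

lemma RB12_bound {U : ℂ} (hU : Complex.abs U ≤ 1) :
    Complex.abs (RB12 U) ≤ (421377412677/4096 : ℝ) := by
  unfold RB12
  exact le_trans (horner_step hU (coeff_abs_le (-13464561361/2048 : ℝ) (-10259629215/512 : ℝ) (13464561361/2048 : ℝ) (10259629215/512 : ℝ) (by norm_num) (by norm_num) (by norm_num) (by norm_num)) (RB13_bound hU)) (by norm_num)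

lemma RB11_bound {U : ℂ} (hU : Complex.abs U ≤ 1) :
    Complex.abs (RB11 U) ≤ (483350804449/4096 : ℝ) := by
  unfold RB11
  exact le_trans (horner_step hU (coeff_abs_le (-2936051401/1024 : ℝ) (-6278648271/512 : ℝ) (2936051401/1024 : ℝ) (6278648271/512 : ℝ) (by norm_num) (by norm_num) (by norm_num) (by norm_num)) (RB12_bound hU)) (by norm_num)

lemma RB10_bound {U : ℂ} (hU : Complex.abs U ≤ 1) :
    Complex.abs (RB10 U) ≤ (64708608065/512 : ℝ) := by
  unfold RB10
  exact le_trans (horner_step hU (coeff_abs_le (-4722726839/4096 : ℝ) (-1849708327/256 : ℝ) (4722726839/4096 : ℝ) (1849708327/256 : ℝ) (by norm_num) (by norm_num) (by norm_num) (by norm_num)) (RB11_bound hU)) (by norm_num)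

lemma RB9_bound {U : ℂ} (hU : Complex.abs U ≤ 1) :
    Complex.abs (RB9 U) ≤ (16472556769/128 : ℝ) := by
  unfold RB9
  exact le_trans (horner_step hU (coeff_abs_le (-44227583/128 : ℝ) (-1004708679/512 : ℝ) (44227583/128 : ℝ) (1004708679/512 : ℝ) (by norm_num) (by norm_num) (by norm_num) (by norm_num)) (RB10_bound hU)) (by norm_num)

lemma RB8_bound {U : ℂ} (hU : Complex.abs U ≤ 1) :
    Complex.abs (RB8 U) ≤ (66092046185/512 : ℝ) := by
  unfold RB8
  exact le_trans (horner_step hU (coeff_abs_le (-19520097/128 : ℝ) (-123738721/512 : ℝ) (19520097/128 : ℝ) (123738721/512 : ℝ) (by norm_num) (by norm_num) (by norm_num) (by norm_num)) (RB9_bound hU)) (by norm_num)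

lemma RB7_bound {U : ℂ} (hU : Complex.abs U ≤ 1) :
    Complex.abs (RB7 U) ≤ (8275153269/64 : ℝ) := by
  unfold RB7
  exact le_trans (horner_step hU (coeff_abs_le (-24905281/256 : ℝ) (59369405/512 : ℝ) (24905281/256 : ℝ) (59369405/512 : ℝ) (by norm_num) (by norm_num) (by norm_num) (by norm_num)) (RB8_bound hU)) (by norm_num)

lemma RB6_bound {U : ℂ} (hU : Complex.abs U ≤ 1) :
    Complex.abs (RB6 U) ≤ (16576418953/128 : ℝ) := by
  unfold RB6
  exact le_trans (horner_step hU (coeff_abs_le (-2298415/32 : ℝ) (16918755/128 : ℝ) (2298415/32 : ℝ) (16918755/128 : ℝ) (by norm_num) (by norm_num) (by norm_num) (by norm_num)) (RB7_bound hU)) (by norm_num)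

lemma RB5_bound {U : ℂ} (hU : Complex.abs U ≤ 1) :
    Complex.abs (RB5 U) ≤ (1037398571/8 : ℝ) := by
  unfold RB5
  exact le_trans (horner_step hU (coeff_abs_le (-6873165/128 : ℝ) (7542509/64 : ℝ) (6873165/128 : ℝ) (7542509/64 : ℝ) (by norm_num) (by norm_num) (by norm_num) (by norm_num)) (RB6_bound hU)) (by norm_num)

lemma RB4_bound {U : ℂ} (hU : Complex.abs U ≤ 1) :
    Complex.abs (RB4 U) ≤ (8301306365/64 : ℝ) := by
  unfold RB4
  exact le_trans (horner_step hU (coeff_abs_le (-312979/32 : ℝ) (1491839/64 : ℝ) (312979/32 : ℝ) (1491839/64 : ℝ) (by norm_num) (by norm_num) (by norm_num) (by norm_num)) (RB5_bound hU)) (by norm_num)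

lemma RB3_bound {U : ℂ} (hU : Complex.abs U ≤ 1) :
    Complex.abs (RB3 U) ≤ (8301631279/64 : ℝ) := by
  unfold RB3
  exact le_trans (horner_step hU (coeff_abs_le (-60365/64 : ℝ) (264549/64 : ℝ) (60365/64 : ℝ) (264549/64 : ℝ) (by norm_num) (by norm_num) (by norm_num) (by norm_num)) (RB4_bound hU)) (by norm_num)

lemma RB2_bound {U : ℂ} (hU : Complex.abs U ≤ 1) :
    Complex.abs (RB2 U) ≤ (8301691625/64 : ℝ) := by
  unfold RB2
  exact le_trans (horner_step hU (coeff_abs_le (15713/32 : ℝ) (3615/8 : ℝ) (15713/32 : ℝ) (3615/8 : ℝ) (by norm_num) (by norm_num) (by norm_num) (by norm_num)) (RB3_bound hU)) (by norm_num)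

lemma RB1_bound {U : ℂ} (hU : Complex.abs U ≤ 1) :
    Complex.abs (RB1 U) ≤ (8301740473/64 : ℝ) := by
  unfold RB1
  exact le_trans (horner_step hU (coeff_abs_le (615/1 : ℝ) (-593/4 : ℝ) (615/1 : ℝ) (593/4 : ℝ) (by norm_num) (by norm_num) (by norm_num) (by norm_num)) (RB2_bound hU)) (by norm_num)

lemma RB0_bound {U : ℂ} (hU : Complex.abs U ≤ 1) :
    Complex.abs (RB0 U) ≤ (8301840473/64 : ℝ) := by
  unfold RB0
  exact le_trans (horner_step hU (coeff_abs_le (936/1 : ℝ) (-1253/2 : ℝ) (936/1 : ℝ) (1253/2 : ℝ) (by norm_num) (by norm_num) (by norm_num) (by norm_num)) (RB1_bound hU)) (by norm_num)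

noncomputable def RBh (U : ℂ) : ℂ := RB0 U

lemma RBh_bound {U : ℂ} (hU : Complex.abs U ≤ 1) : Complex.abs (RBh U) ≤ 2^28 := by
  unfold RBh
  exact le_trans (RB0_bound hU) (by norm_num)

lemma identA (U : ℂ) :
    (Aexp U)^4 - 1 - U * ((Aexp U)^3 - (Aexp U)^2 + Aexp U - 5) = U^6 * RAh U := by
  unfold Aexp RAh RA0 RA1 RA2 RA3 RA4 RA5 RA6 RA7 RA8 RA9 RA10 RA11 RA12 RA13 RA14
  push_cast
  ring

lemma identB (U : ℂ) :
    (Bexp U)^4 - 1 - U * ((Bexp U)^3 - (Bexp U)^2 + Bexp U - 5) = U^6 * RBh U := by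
  unfold Bexp RBh RB0 RB1 RB2 RB3 RB4 RB5 RB6 RB7 RB8 RB9 RB10 RB11 RB12 RB13 RB14
  push_cast
  linear_combination ((-1) + (5)*U^1 + (1/2)*U^3 + (2)*U^4 + (17/2)*U^5 + (-1797/2)*U^6 + (-4821/8)*U^7 + (-13471/32)*U^8 + (74653/64)*U^9 + (334739/32)*U^10 + (7098137/128)*U^11 + (1185081/16)*U^12 + (27152389/256)*U^13 + (23055721/128)*U^14 + (54385871/128)*U^15 + (5541881799/4096)*U^16 + (3364843689/1024)*U^17 + (15251575697/2048)*U^18 + (13397654545/1024)*U^19 + (58378027775/4096)*U^20 + (-1)*Complex.I^1*U^1 + (1)*Complex.I^1*U^2 + (1)*Complex.I^1*U^3 + (5/2)*Complex.I^1*U^4 + (53/8)*Complex.I^1*U^5 + (5143/8)*Complex.I^1*U^6 + (2059/8)*Complex.I^1*U^7 + (-2231/8)*Complex.I^1*U^8 + (-241499/64)*Complex.I^1*U^9 + (-1442501/64)*Complex.I^1*U^10 + (-7429295/64)*Complex.I^1*U^11 + (-16130975/128)*Complex.I^1*U^12 + (-39916249/512)*Complex.I^1*U^13 + (207055365/512)*Complex.I^1*U^14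 + (1312470127/512)*Complex.I^1*U^15 + (2323845341/256)*Complex.I^1*U^16 + (8126741419/512)*Complex.I^1*U^17 + (13820071895/512)*Complex.I^1*U^18 + (19785604575/512)*Complex.I^1*U^19 + (9143921375/256)*Complex.I^1*U^20 + (1)*Complex.I^2 + (-4)*Complex.I^2*U^1 + (-2)*Complex.I^2*U^2 + (-2)*Complex.I^2*U^3 + (-9/2)*Complex.I^2*U^4 + (-12)*Complex.I^2*U^5 + (1807/2)*Complex.I^2*U^6 + (2751/4)*Complex.I^2*U^7 + (8091/32)*Complex.I^2*U^8 + (-20689/8)*Complex.I^2*U^9 + (-291171/16)*Complex.I^2*U^10 + (-2993553/32)*Complex.I^2*U^11 + (-13712031/128)*Complex.I^2*U^12 + (-1336681/16)*Complex.I^2*U^13 + (24257171/128)*Complex.I^2*U^14 + (356832797/256)*Complex.I^2*U^15 + (19956223761/4096)*Complex.I^2*U^16 + (8351178435/1024)*Complex.I^2*U^17 + (26978329675/2048)*Complex.I^2*U^18 + (18416630375/1024)*Complex.I^2*U^19 + (65037750625/4096)*Complex.I^2*U^20) * Complex.I_sq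

lemma identS (u : ℝ) : Are u^2 - (Bre u^2 + Bim u^2) = u^5 * Spoly u := by
  unfold Are Bre Bim Spoly; ring

lemma Acast (u : ℝ) : Aexp ((u:ℝ):ℂ) = ((Are u : ℝ):ℂ) := by
  unfold Aexp Are; push_cast; ring

lemma Bcast (u : ℝ) : Bexp ((u:ℝ):ℂ) = ((Bre u : ℝ):ℂ) + ((Bim u : ℝ):ℂ) * Complex.I := by
  unfold Bexp Bre Bim; push_cast; ring


lemma Aexp_near {U : ℂ} (hU : Complex.abs U ≤ 1/4096) :
    Complex.abs (Aexp U - 1) ≤ 2 * Complex.abs U := by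
  have hU1 : Complex.abs U ≤ 1 := hU.trans (by norm_num)
  have h5 := real_abs_le (501/8) (501/8) (by norm_num) (by norm_num)
  have h4 := horner_step (c := ((71/4:ℝ):ℂ)) hU1
    (real_abs_le (71/4) (71/4) (by norm_num) (by norm_num)) h5
  have h3 := horner_step (c := ((11/2:ℝ):ℂ)) hU1
    (real_abs_le (11/2) (11/2) (by norm_num) (by norm_num)) h4
  have h2 := horner_step (c := ((2:ℝ):ℂ)) hU1
    (real_abs_le 2 2 (by norm_num) (by norm_num)) h3
  set w := ((2:ℝ):ℂ) + U * (((11/2:ℝ):ℂ) + U * (((71/4:ℝ):ℂ) + U * ((501/8:ℝ):ℂ))) with hw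
  have hid : Aexp U - 1 = U * (-(1 + U * w)) := by rw [hw]; unfold Aexp; ring
  rw [hid, map_mul, AbsoluteValue.map_neg]
  have hb : Complex.abs (1 + U * w) ≤ 2 := by
    have ha : Complex.abs (1 + U * w) ≤ 1 + Complex.abs U * Complex.abs w := by
      have := Complex.abs.add_le 1 (U * w)
      rw [map_one, map_mul] at this
      exact this
    have : Complex.abs U * Complex.abs w ≤ (1/4096) * 89 := by
      apply mul_le_mul hU (h2.trans (by norm_num)) (Complex.abs.nonneg _) (by norm_num)
    linarith
  nlinarith [Complex.abs.nonneg U]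

lemma Bexp_near {U : ℂ} (hU : Complex.abs U ≤ 1/4096) :
    Complex.abs (Bexp U - Complex.I) ≤ 2 * Complex.abs U := by
  have hU1 : Complex.abs U ≤ 1 := hU.trans (by norm_num)
  have h5 := coeff_abs_le (71/2) (505/8) (71/2) (505/8) (by norm_num) (by norm_num)
    (by norm_num) (by norm_num)
  have h4 := horner_step hU1 (coeff_abs_le (33/4) (143/8) (33/4) (143/8) (by norm_num)
    (by norm_num) (by norm_num) (by norm_num)) h5
  have h3 := horner_step hU1 (coeff_abs_le 2 (11/2) 2 (11/2) (by norm_num) (by norm_num)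
    (by norm_num) (by norm_num)) h4
  have h2 := horner_step hU1 (coeff_abs_le (1/2) 2 (1/2) 2 (by norm_num) (by norm_num)
    (by norm_num) (by norm_num)) h3
  set w := (((1/2:ℝ):ℂ) + ((2:ℝ):ℂ)*Complex.I) + U * ((((2:ℝ):ℂ) + ((11/2:ℝ):ℂ)*Complex.I)
    + U * ((((33/4:ℝ):ℂ) + ((143/8:ℝ):ℂ)*Complex.I)
    + U * (((71/2:ℝ):ℂ) + ((505/8:ℝ):ℂ)*Complex.I))) with hw
  have hid : Bexp U - Complex.I = U * (-(Complex.I + U * w)) := by rw [hw]; unfold Bexp; ring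
  rw [hid, map_mul, AbsoluteValue.map_neg]
  have hb : Complex.abs (Complex.I + U * w) ≤ 2 := by
    have ha : Complex.abs (Complex.I + U * w) ≤ 1 + Complex.abs U * Complex.abs w := by
      have := Complex.abs.add_le Complex.I (U * w)
      rw [Complex.abs_I, map_mul] at this
      exact this
    have : Complex.abs U * Complex.abs w ≤ (1/4096) * 135 := by
      apply mul_le_mul hU (h2.trans (by norm_num)) (Complex.abs.nonneg _) (by norm_num)
    linarith
  nlinarith [Complex.abs.nonneg U]

lemma Spoly_range {u : ℝ} (h0 : 0 ≤ u) (h1 : u ≤ 1/4096) : -2 ≤ Spoly u ∧ Spoly u ≤ -1 := by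
  unfold Spoly
  have h2 : u^2 ≤ u := by nlinarith
  have h3 : u^3 ≤ u^2 := by nlinarith
  have h4 : u^4 ≤ u^3 := by nlinarith
  have h5 : u^5 ≤ u^4 := by nlinarith
  constructor <;>
    nlinarith [pow_nonneg h0 2, pow_nonneg h0 3, pow_nonneg h0 4, pow_nonneg h0 5]

lemma Are_range {u : ℝ} (h0 : 0 ≤ u) (h1 : u ≤ 1/4096) : 1/2 ≤ Are u ∧ Are u ≤ 1 := by
  unfold Are
  have h2 : u^2 ≤ u := by nlinarith
  have h3 : u^3 ≤ u^2 := by nlinarith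
  have h4 : u^4 ≤ u^3 := by nlinarith
  have h5 : u^5 ≤ u^4 := by nlinarith
  constructor <;>
    nlinarith [pow_nonneg h0 2, pow_nonneg h0 3, pow_nonneg h0 4, pow_nonneg h0 5]

lemma sq_close {x a d : ℝ} (h : |x - a| ≤ d) (hx : 0 ≤ x) (hx2 : x ≤ 2) (ha : 0 ≤ a)
    (ha2 : a ≤ 2) : |x^2 - a^2| ≤ 4*d := by
  have h1 := abs_le.mp h
  rw [abs_le]
  constructor <;> nlinarith [h1.1, h1.2]


lemma abs_near' {a b : ℂ} {s : ℝ} (hb : Complex.abs b = s) :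
    |Complex.abs a - s| ≤ Complex.abs (a - b) :=
  hb ▸ Complex.abs.abs_abv_sub_le_abv_sub a b

lemma absI1 : 7/5 ≤ Complex.abs (Complex.I - 1) ∧ Complex.abs (Complex.I - 1) ≤ 3/2 := by
  have h : Complex.abs (Complex.I - 1) ^ 2 = 2 := by
    rw [Complex.sq_abs]; simp [Complex.normSq_apply]; norm_num
  constructor <;> nlinarith [Complex.abs.nonneg (Complex.I - 1)]

lemma absI2 : 7/5 ≤ Complex.abs (Complex.I + 1) ∧ Complex.abs (Complex.I + 1) ≤ 3/2 := by
  have h : Complex.abs (Complex.I + 1) ^ 2 = 2 := by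
    rw [Complex.sq_abs]; simp [Complex.normSq_apply]; norm_num
  constructor <;> nlinarith [Complex.abs.nonneg (Complex.I + 1)]

section Dbounds
variable {M : ℕ} (hM : (4096:ℝ) ≤ (M:ℝ))

lemma D1_low (hM : (4096:ℝ) ≤ (M:ℝ)) :
    ∀ z ∈ Metric.closedBall (1:ℂ) (2/(M:ℝ)),
      2*(M:ℝ) ≤ Complex.abs ((z^2+1)*((M:ℂ)*(z+1)-1)) := by
  intro z hz
  have hM0 : (0:ℝ) < M := by linarith
  rw [Metric.mem_closedBall, cdist_eq] at hz
  set t := Complex.abs (z - 1) with htdef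
  have ht0 : 0 ≤ t := Complex.abs.nonneg _
  have hMt : (M:ℝ) * t ≤ 2 := by
    have := (div_le_iff₀ hM0).mp (le_of_eq (rfl : 2/(M:ℝ) = 2/(M:ℝ)))
    nlinarith [(le_div_iff₀ hM0).mp hz]
  have ht : t ≤ 1/100 := by nlinarith
  -- |z+1|
  have h1 : |Complex.abs (z+1) - 2| ≤ t := by
    have h := abs_near' (a := z+1) (b := 2) Complex.abs_two
    have e : z + 1 - 2 = z - 1 := by ring
    rwa [e] at h
  have h1' := abs_le.mp h1
  -- |z^2+1|
  have h2 : |Complex.abs (z^2+1) - 2| ≤ t * (t + 2) := by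
    have h := abs_near' (a := z^2+1) (b := 2) Complex.abs_two
    have e : z^2 + 1 - 2 = (z-1)*(z+1) := by ring
    rw [e, map_mul] at h
    refine h.trans ?_
    have : Complex.abs (z+1) ≤ t + 2 := by linarith [h1'.2]
    nlinarith
  have h2' : (19:ℝ)/10 ≤ Complex.abs (z^2+1) := by
    have := (abs_le.mp h2).1
    nlinarith
  -- |M(z+1)-1|
  have h3 : 2*(M:ℝ) - 3 ≤ Complex.abs ((M:ℂ)*(z+1)-1) := by
    have h := abs_near' (a := (M:ℂ)*(z+1)) (b := 1) (map_one Complex.abs)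
    rw [map_mul, Complex.abs_natCast] at h
    have h4 : (M:ℝ) * Complex.abs (z+1) - 1 ≤ Complex.abs ((M:ℂ)*(z+1) - 1) :=
      le_trans (le_trans (by linarith [le_abs_self ((M:ℝ) * Complex.abs (z+1) - 1)]) h) (le_refl _)
    have h5 : (M:ℝ) * (2 - t) ≤ (M:ℝ) * Complex.abs (z+1) := by
      have := h1'.1; nlinarith
    nlinarith
  rw [map_mul]
  have hpos : (0:ℝ) ≤ 2*(M:ℝ) - 3 := by linarith
  have key := mul_le_mul h2' h3 hpos (Complex.abs.nonneg _)
  nlinarith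

lemma D1_lip (hM : (4096:ℝ) ≤ (M:ℝ)) :
    ∀ z ∈ Metric.closedBall (1:ℂ) (2/(M:ℝ)), ∀ w ∈ Metric.closedBall (1:ℂ) (2/(M:ℝ)),
      Complex.abs ((z^2+1)*((M:ℂ)*(z+1)-1) - (w^2+1)*((M:ℂ)*(w+1)-1))
        ≤ 16*(M:ℝ)*Complex.abs (z - w) := by
  intro z hz w hw
  have hM0 : (0:ℝ) < M := by linarith
  rw [Metric.mem_closedBall, cdist_eq] at hz hw
  set tz := Complex.abs (z - 1) with htz
  set tw := Complex.abs (w - 1) with htw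
  have htz0 : 0 ≤ tz := Complex.abs.nonneg _
  have htw0 : 0 ≤ tw := Complex.abs.nonneg _
  have hMtz : (M:ℝ) * tz ≤ 2 := by nlinarith [(le_div_iff₀ hM0).mp hz]
  have hMtw : (M:ℝ) * tw ≤ 2 := by nlinarith [(le_div_iff₀ hM0).mp hw]
  have htz1 : tz ≤ 1/100 := by nlinarith
  have htw1 : tw ≤ 1/100 := by nlinarith
  have e : (z^2+1)*((M:ℂ)*(z+1)-1) - (w^2+1)*((M:ℂ)*(w+1)-1)
      = (z-w) * ((z+w)*((M:ℂ)*(z+1)-1) + (w^2+1)*(M:ℂ)) := by ring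
  rw [e, map_mul]
  -- bounds
  have hzw : Complex.abs (z+w) ≤ 3 := by
    have h := Complex.abs.add_le (z-1) (w+1)
    have e2 : (z-1) + (w+1) = z + w := by ring
    rw [e2] at h
    have h2 := Complex.abs.add_le (w-1) 2
    have e3 : (w-1) + 2 = w + 1 := by ring
    rw [e3, Complex.abs_two] at h2
    linarith
  have hz1 : Complex.abs (z+1) ≤ 2 + tz := by
    have h := Complex.abs.add_le (z-1) 2
    have e2 : (z-1) + 2 = z + 1 := by ring
    rw [e2, Complex.abs_two] at h
    linarith
  have hE : Complex.abs ((M:ℂ)*(z+1)-1) ≤ 2*(M:ℝ) + 3 := by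
    have h := Complex.abs.sub_le_add ((M:ℂ)*(z+1)) 1
    rw [map_mul, Complex.abs_natCast, map_one] at h
    nlinarith
  have hw2 : Complex.abs (w^2+1) ≤ 3 := by
    have h := abs_near' (a := w^2+1) (b := 2) Complex.abs_two
    have e2 : w^2 + 1 - 2 = (w-1)*(w+1) := by ring
    rw [e2, map_mul] at h
    have hw1 : Complex.abs (w+1) ≤ 2 + tw := by
      have h2 := Complex.abs.add_le (w-1) 2
      have e3 : (w-1) + 2 = w + 1 := by ring
      rw [e3, Complex.abs_two] at h2
      linarith
    have := (abs_le.mp h).2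
    nlinarith
  have hinner : Complex.abs ((z+w)*((M:ℂ)*(z+1)-1) + (w^2+1)*(M:ℂ)) ≤ 16*(M:ℝ) := by
    have h := Complex.abs.add_le ((z+w)*((M:ℂ)*(z+1)-1)) ((w^2+1)*(M:ℂ))
    rw [map_mul, map_mul, Complex.abs_natCast] at h
    have b1 : Complex.abs (z+w) * Complex.abs ((M:ℂ)*(z+1)-1) ≤ 3 * (2*(M:ℝ)+3) := by
      apply mul_le_mul hzw hE (Complex.abs.nonneg _) (by norm_num)
    have b2 : Complex.abs (w^2+1) * (M:ℝ) ≤ 3 * (M:ℝ) := by nlinarith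
    nlinarith
  calc Complex.abs (z-w) * Complex.abs ((z+w)*((M:ℂ)*(z+1)-1) + (w^2+1)*(M:ℂ))
      ≤ Complex.abs (z-w) * (16*(M:ℝ)) := by
        apply mul_le_mul_of_nonneg_left hinner (Complex.abs.nonneg _)
    _ = 16*(M:ℝ)*Complex.abs (z - w) := by ring

end Dbounds


lemma D2_low {M : ℕ} (hM : (4096:ℝ) ≤ (M:ℝ)) :
    ∀ z ∈ Metric.closedBall (Complex.I) (2/(M:ℝ)),
      2*(M:ℝ) ≤ Complex.abs ((z-1)*(z+Complex.I)*((M:ℂ)*(z+1)-1)) := by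
  intro z hz
  have hM0 : (0:ℝ) < M := by linarith
  rw [Metric.mem_closedBall, cdist_eq] at hz
  set t := Complex.abs (z - Complex.I) with htdef
  have ht0 : 0 ≤ t := Complex.abs.nonneg _
  have hMt : (M:ℝ) * t ≤ 2 := by nlinarith [(le_div_iff₀ hM0).mp hz]
  have ht : t ≤ 1/100 := by nlinarith
  -- |z-1| ≥ 7/5 - t
  have h1 : 7/5 - t ≤ Complex.abs (z-1) := by
    have h := abs_near' (a := z - 1) (b := Complex.I - 1)
      (rfl : Complex.abs (Complex.I - 1) = _)
    have e : (z - 1) - (Complex.I - 1) = z - Complex.I := by ring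
    rw [e] at h
    have := (abs_le.mp h).1
    linarith [absI1.1]
  -- |z+I| ≥ 2 - t
  have h2 : 2 - t ≤ Complex.abs (z+Complex.I) := by
    have h := abs_near' (a := z + Complex.I) (b := 2*Complex.I)
      (by rw [map_mul, Complex.abs_two, Complex.abs_I, mul_one])
    have e : (z + Complex.I) - 2*Complex.I = z - Complex.I := by ring
    rw [e] at h
    linarith [(abs_le.mp h).1]
  -- |z+1| ≥ 7/5 - t
  have h3 : 7/5 - t ≤ Complex.abs (z+1) := by
    have h := abs_near' (a := z + 1) (b := Complex.I + 1)
      (rfl : Complex.abs (Complex.I + 1) = _)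
    have e : (z + 1) - (Complex.I + 1) = z - Complex.I := by ring
    rw [e] at h
    have := (abs_le.mp h).1
    linarith [absI2.1]
  -- |M(z+1)-1| ≥ M(7/5-t) - 1
  have h4 : (M:ℝ)*(7/5) - 3 ≤ Complex.abs ((M:ℂ)*(z+1)-1) := by
    have h := abs_near' (a := (M:ℂ)*(z+1)) (b := 1) (map_one Complex.abs)
    rw [map_mul, Complex.abs_natCast] at h
    have h5 : (M:ℝ) * Complex.abs (z+1) - 1 ≤ Complex.abs ((M:ℂ)*(z+1) - 1) :=
      le_trans (le_abs_self _) h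
    have h6 : (M:ℝ) * (7/5 - t) ≤ (M:ℝ) * Complex.abs (z+1) := by nlinarith
    nlinarith
  rw [map_mul, map_mul]
  have p1 : (0:ℝ) ≤ 7/5 - t := by linarith
  have p2 : (0:ℝ) ≤ 2 - t := by linarith
  have p4 : (0:ℝ) ≤ (M:ℝ)*(7/5) - 3 := by nlinarith
  have k1 := mul_le_mul h1 h2 p2 (Complex.abs.nonneg _)
  have k2 := mul_le_mul k1 h4 p4 (mul_nonneg (Complex.abs.nonneg _) (Complex.abs.nonneg _))
  nlinarith

lemma D2_lip {M : ℕ} (hM : (4096:ℝ) ≤ (M:ℝ)) :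
    ∀ z ∈ Metric.closedBall (Complex.I) (2/(M:ℝ)),
      ∀ w ∈ Metric.closedBall (Complex.I) (2/(M:ℝ)),
      Complex.abs ((z-1)*(z+Complex.I)*((M:ℂ)*(z+1)-1)
          - (w-1)*(w+Complex.I)*((M:ℂ)*(w+1)-1))
        ≤ 16*(M:ℝ)*Complex.abs (z - w) := by
  intro z hz w hw
  have hM0 : (0:ℝ) < M := by linarith
  rw [Metric.mem_closedBall, cdist_eq] at hz hw
  set tz := Complex.abs (z - Complex.I) with htz
  set tw := Complex.abs (w - Complex.I) with htw
  have htz0 : 0 ≤ tz := Complex.abs.nonneg _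
  have htw0 : 0 ≤ tw := Complex.abs.nonneg _
  have hMtz : (M:ℝ) * tz ≤ 2 := by nlinarith [(le_div_iff₀ hM0).mp hz]
  have hMtw : (M:ℝ) * tw ≤ 2 := by nlinarith [(le_div_iff₀ hM0).mp hw]
  have htz1 : tz ≤ 1/100 := by nlinarith
  have htw1 : tw ≤ 1/100 := by nlinarith
  -- upper bounds
  have uz1 : Complex.abs (z-1) ≤ 3/2 + tz := by
    have h := Complex.abs.add_le (z - Complex.I) (Complex.I - 1)
    have e : (z - Complex.I) + (Complex.I - 1) = z - 1 := by ring
    rw [e] at h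
    linarith [absI1.2]
  have uw1 : Complex.abs (w-1) ≤ 3/2 + tw := by
    have h := Complex.abs.add_le (w - Complex.I) (Complex.I - 1)
    have e : (w - Complex.I) + (Complex.I - 1) = w - 1 := by ring
    rw [e] at h
    linarith [absI1.2]
  have uzI : Complex.abs (z+Complex.I) ≤ 2 + tz := by
    have h := Complex.abs.add_le (z - Complex.I) (2*Complex.I)
    have e : (z - Complex.I) + 2*Complex.I = z + Complex.I := by ring
    rw [e, map_mul, Complex.abs_two, Complex.abs_I, mul_one] at h
    linarith
  have uwI : Complex.abs (w+Complex.I) ≤ 2 + tw := by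
    have h := Complex.abs.add_le (w - Complex.I) (2*Complex.I)
    have e : (w - Complex.I) + 2*Complex.I = w + Complex.I := by ring
    rw [e, map_mul, Complex.abs_two, Complex.abs_I, mul_one] at h
    linarith
  have uz2 : Complex.abs (z+1) ≤ 3/2 + tz := by
    have h := Complex.abs.add_le (z - Complex.I) (Complex.I + 1)
    have e : (z - Complex.I) + (Complex.I + 1) = z + 1 := by ring
    rw [e] at h
    linarith [absI2.2]
  have uE : Complex.abs ((M:ℂ)*(z+1)-1) ≤ 2*(M:ℝ) := by
    have h := Complex.abs.sub_le_add ((M:ℂ)*(z+1)) 1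
    rw [map_mul, Complex.abs_natCast, map_one] at h
    nlinarith
  -- decomposition
  have e : (z-1)*(z+Complex.I)*((M:ℂ)*(z+1)-1) - (w-1)*(w+Complex.I)*((M:ℂ)*(w+1)-1)
      = (z-w) * ((z+Complex.I)*((M:ℂ)*(z+1)-1) + (w-1)*((M:ℂ)*(z+1)-1)
          + (w-1)*(w+Complex.I)*(M:ℂ)) := by ring
  rw [e, map_mul]
  have hinner : Complex.abs ((z+Complex.I)*((M:ℂ)*(z+1)-1) + (w-1)*((M:ℂ)*(z+1)-1)
      + (w-1)*(w+Complex.I)*(M:ℂ)) ≤ 16*(M:ℝ) := by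
    have ha := Complex.abs.add_le ((z+Complex.I)*((M:ℂ)*(z+1)-1) + (w-1)*((M:ℂ)*(z+1)-1))
      ((w-1)*(w+Complex.I)*(M:ℂ))
    have hb := Complex.abs.add_le ((z+Complex.I)*((M:ℂ)*(z+1)-1)) ((w-1)*((M:ℂ)*(z+1)-1))
    rw [map_mul] at ha hb
    rw [map_mul] at hb
    rw [map_mul, Complex.abs_natCast] at ha
    have b1 : Complex.abs (z+Complex.I) * Complex.abs ((M:ℂ)*(z+1)-1) ≤ (2+tz) * (2*(M:ℝ)) :=
      mul_le_mul uzI uE (Complex.abs.nonneg _) (by linarith)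
    have b2 : Complex.abs (w-1) * Complex.abs ((M:ℂ)*(z+1)-1) ≤ (3/2+tw) * (2*(M:ℝ)) :=
      mul_le_mul uw1 uE (Complex.abs.nonneg _) (by linarith)
    have b3 : Complex.abs (w-1) * Complex.abs (w+Complex.I) * (M:ℝ) ≤ ((3/2+tw)*(2+tw)) * (M:ℝ) := by
      have := mul_le_mul uw1 uwI (Complex.abs.nonneg _) (by linarith)
      nlinarith
    nlinarith
  calc Complex.abs (z-w) * Complex.abs _ ≤ Complex.abs (z-w) * (16*(M:ℝ)) :=
        mul_le_mul_of_nonneg_left hinner (Complex.abs.nonneg _)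
    _ = 16*(M:ℝ)*Complex.abs (z - w) := by ring


lemma div_bound {m u r : ℝ} (hm : 0 < m) (hr : 0 ≤ r) (hR : r ≤ 2^28) (hu : 0 ≤ u) :
    m * u^6 * r / m ≤ 2^28 * u^6 := by
  have he : m * u^6 * r / m = u^6 * r := by field_simp
  rw [he]
  have := mul_le_mul_of_nonneg_left hR (pow_nonneg hu 6)
  linarith

lemma combine_bounds {x y ar bb u : ℝ} (hu0 : 0 < u) (hu : u ≤ 1/4096)
    (hu40 : u ≤ ((2:ℝ)^40)⁻¹)
    (hx2 : |x^2 - ar^2| ≤ 4*(2^28*u^6)) (hy2 : |y^2 - bb| ≤ 4*(2^28*u^6))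
    (hSid : ar^2 - bb = u^5 * Spoly u)
    (hx0 : 0 ≤ x) (hy0 : 0 ≤ y) (hx1 : 1 - 2*u ≤ x) (hy1 : 1 - 2*u ≤ y) :
    x < y ∧ y - x ≤ 3000*u^5 := by
  have hS := Spoly_range hu0.le hu
  have hu5 : 0 < u^5 := pow_pos hu0 5
  have hS1 : ar^2 - bb ≤ -(u^5) := by
    rw [hSid]
    have := mul_le_mul_of_nonneg_left hS.2 hu5.le
    linarith
  have hS2 : -(2*u^5) ≤ ar^2 - bb := by
    rw [hSid]
    have := mul_le_mul_of_nonneg_left hS.1 hu5.le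
    linarith
  have h6 : u^6 ≤ ((2:ℝ)^40)⁻¹ * u^5 := by
    calc u^6 = u * u^5 := by ring
      _ ≤ ((2:ℝ)^40)⁻¹ * u^5 := mul_le_mul_of_nonneg_right hu40 hu5.le
  have e1 := abs_le.mp hx2
  have e2 := abs_le.mp hy2
  have hsq : x^2 + u^5/2 ≤ y^2 := by linarith
  have hxy : x < y := by nlinarith [hsq, hu5, hx0, hy0]
  have hup : y^2 - x^2 ≤ 3*u^5 := by linarith
  have hsum : 1 ≤ x + y := by linarith
  refine ⟨hxy, ?_⟩
  nlinarith [mul_le_mul_of_nonneg_left hsum (le_of_lt (sub_pos.mpr hxy)), hup, hu5]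


/-- For `P_M(X) = M(X⁴ − 1) − (X³ − X² + X − 5)`, there are roots `z₁` near `1`
and `z_i` near `i` with the stated expansions up to `O(1/M⁵)`, whose absolute
values differ by a nonzero quantity that is `O(1/M⁵) = O(H(P_M)^{-5})`
(the height of `P_M` being `M`). -/
theorem degree_four_family_abs_sep :
    ∃ C : ℝ, 0 < C ∧ ∃ M₀ : ℕ, ∀ M : ℕ, M₀ ≤ M →
      ∃ z₁ zi : ℂ,
        (M : ℂ) * (z₁ ^ 4 - 1) - (z₁ ^ 3 - z₁ ^ 2 + z₁ - 5) = 0 ∧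
        (M : ℂ) * (zi ^ 4 - 1) - (zi ^ 3 - zi ^ 2 + zi - 5) = 0 ∧
        ‖(z₁ - (1 - 1 / (M : ℂ) - 2 / (M : ℂ) ^ 2
            - 11 / (2 * (M : ℂ) ^ 3) - 71 / (4 * (M : ℂ) ^ 4)))‖
          ≤ C / (M : ℝ) ^ 5 ∧
        ‖(zi - (Complex.I - Complex.I / (M : ℂ)
            - (1 + 4 * Complex.I) / (2 * (M : ℂ) ^ 2)
            - (4 + 11 * Complex.I) / (2 * (M : ℂ) ^ 3)
            - (66 + 143 * Complex.I) / (8 * (M : ℂ) ^ 4)))‖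
          ≤ C / (M : ℝ) ^ 5 ∧
        0 < |‖z₁‖ - ‖zi‖| ∧
        |‖z₁‖ - ‖zi‖| ≤ C / (M : ℝ) ^ 5 := by
  refine ⟨3000, by norm_num, 2^40, fun M hM => ?_⟩
  simp only [← Complex.abs_apply]
  have hMR : (2:ℝ)^40 ≤ (M:ℝ) := by
    have h : ((2^40 : ℕ) : ℝ) ≤ (M:ℝ) := Nat.cast_le.mpr hM
    push_cast at h
    linarith
  have hM0 : (0:ℝ) < (M:ℝ) := lt_of_lt_of_le (by norm_num) hMR
  have hM4096 : (4096:ℝ) ≤ (M:ℝ) := le_trans (by norm_num) hMR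
  have hM32 : (32:ℝ) ≤ (M:ℝ) := le_trans (by norm_num) hM4096
  have hMnat : M ≠ 0 := by
    rintro rfl; norm_num at hM0
  have hMne : (M:ℂ) ≠ 0 := Nat.cast_ne_zero.mpr hMnat
  set u : ℝ := (M:ℝ)⁻¹ with hu_def
  set U : ℂ := ((u:ℝ):ℂ) with hU_def
  have hu0 : 0 < u := by rw [hu_def]; positivity
  have hUM : U = ((M:ℂ))⁻¹ := by rw [hU_def, hu_def]; push_cast; ring
  have hUabs : Complex.abs U = u := by rw [hU_def, Complex.abs_ofReal, abs_of_pos hu0]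
  have hu40 : u ≤ ((2:ℝ)^40)⁻¹ := by
    rw [hu_def]
    exact inv_anti₀ (by norm_num) hMR
  have hu1 : u ≤ 1/4096 := le_trans hu40 (by norm_num)
  have hUsmall : Complex.abs U ≤ 1/4096 := by rw [hUabs]; exact hu1
  have hU1 : Complex.abs U ≤ 1 := hUsmall.trans (by norm_num)
  have h2M : 2/(M:ℝ) = 2*u := by rw [hu_def]; ring
  have hAmem : Aexp U ∈ Metric.closedBall (1:ℂ) (2/(M:ℝ)) := by
    rw [Metric.mem_closedBall, Complex.dist_eq, h2M]
    have h := Aexp_near hUsmall; rwa [hUabs] at h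
  have hBmem : Bexp U ∈ Metric.closedBall Complex.I (2/(M:ℝ)) := by
    rw [Metric.mem_closedBall, Complex.dist_eq, h2M]
    have h := Bexp_near hUsmall; rwa [hUabs] at h
  obtain ⟨z₁, hz₁root, hz₁mem, hz₁close⟩ := key_root M hM32 1
    (fun z => (z^2+1)*((M:ℂ)*(z+1)-1)) (fun z => by ring) (D1_low hM4096) (D1_lip hM4096)
    (Aexp U) hAmem
  obtain ⟨zi, hziroot, hzimem, hziclose⟩ := key_root M hM32 Complex.I
    (fun z => (z-1)*(z+Complex.I)*((M:ℂ)*(z+1)-1))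
    (fun z => by linear_combination (-(z-1)*((M:ℂ)*(z+1)-1)) * Complex.I_sq)
    (D2_low hM4096) (D2_lip hM4096) (Bexp U) hBmem
  have hUne : U ≠ 0 := by rw [hUM]; exact inv_ne_zero hMne
  have hMinv : (M:ℂ) = U⁻¹ := by rw [hUM, inv_inv]
  have hMU : (M:ℂ) * U = 1 := by rw [hUM]; exact mul_inv_cancel₀ hMne
  have hPA : (M:ℂ)*((Aexp U)^4 - 1) - ((Aexp U)^3 - (Aexp U)^2 + Aexp U - 5)
      = (M:ℂ) * U^6 * RAh U := by
    linear_combination (M:ℂ) * identA U + ((Aexp U)^3 - (Aexp U)^2 + Aexp U - 5) * hMU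
  have hPB : (M:ℂ)*((Bexp U)^4 - 1) - ((Bexp U)^3 - (Bexp U)^2 + Bexp U - 5)
      = (M:ℂ) * U^6 * RBh U := by
    linear_combination (M:ℂ) * identB U + ((Bexp U)^3 - (Bexp U)^2 + Bexp U - 5) * hMU
  have hu6 : (0:ℝ) ≤ u^6 := pow_nonneg hu0.le 6
  have hz1A : Complex.abs (z₁ - Aexp U) ≤ 2^28 * u^6 := by
    refine hz₁close.trans ?_
    rw [hPA, map_mul, map_mul, map_pow, hUabs, Complex.abs_natCast]
    exact div_bound hM0 (Complex.abs.nonneg _) (RAh_bound hU1) hu0.le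
  have hziB : Complex.abs (zi - Bexp U) ≤ 2^28 * u^6 := by
    refine hziclose.trans ?_
    rw [hPB, map_mul, map_mul, map_pow, hUabs, Complex.abs_natCast]
    exact div_bound hM0 (Complex.abs.nonneg _) (RBh_bound hU1) hu0.le
  have h3000 : (3000:ℝ)/(M:ℝ)^5 = 3000 * u^5 := by
    rw [hu_def, inv_pow]; ring
  have hu5 : (0:ℝ) ≤ u^5 := pow_nonneg hu0.le 5
  have h6 : u^6 ≤ ((2:ℝ)^40)⁻¹ * u^5 := by
    calc u^6 = u * u^5 := by ring
      _ ≤ ((2:ℝ)^40)⁻¹ * u^5 := mul_le_mul_of_nonneg_right hu40 hu5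
  -- goal 3
  have hg3 : Complex.abs (z₁ - (1 - 1/(M:ℂ) - 2/(M:ℂ)^2 - 11/(2*(M:ℂ)^3) - 71/(4*(M:ℂ)^4)))
      ≤ 3000 / (M:ℝ)^5 := by
    have hstmt : (1:ℂ) - 1/(M:ℂ) - 2/(M:ℂ)^2 - 11/(2*(M:ℂ)^3) - 71/(4*(M:ℂ)^4)
        = Aexp U + ((501/8:ℝ):ℂ)*U^5 := by
      rw [hMinv]; unfold Aexp; push_cast; field_simp; ring
    rw [hstmt, h3000]
    have e : z₁ - (Aexp U + ((501/8:ℝ):ℂ)*U^5) = (z₁ - Aexp U) - ((501/8:ℝ):ℂ)*U^5 := by ring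
    rw [e]
    have h1 := Complex.abs.sub_le_add (z₁ - Aexp U) (((501/8:ℝ):ℂ)*U^5)
    have h2 : Complex.abs (((501/8:ℝ):ℂ)*U^5) = (501/8) * u^5 := by
      rw [map_mul, map_pow, hUabs, Complex.abs_ofReal]; norm_num
    rw [h2] at h1
    linarith
  -- goal 4
  have hg4 : Complex.abs (zi - (Complex.I - Complex.I/(M:ℂ) - (1+4*Complex.I)/(2*(M:ℂ)^2)
      - (4+11*Complex.I)/(2*(M:ℂ)^3) - (66+143*Complex.I)/(8*(M:ℂ)^4)))
      ≤ 3000 / (M:ℝ)^5 := by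
    have hstmt : Complex.I - Complex.I/(M:ℂ) - (1+4*Complex.I)/(2*(M:ℂ)^2)
        - (4+11*Complex.I)/(2*(M:ℂ)^3) - (66+143*Complex.I)/(8*(M:ℂ)^4)
        = Bexp U + (((71/2:ℝ):ℂ) + ((505/8:ℝ):ℂ)*Complex.I)*U^5 := by
      rw [hMinv]; unfold Bexp; push_cast; field_simp; ring
    rw [hstmt, h3000]
    have e : zi - (Bexp U + (((71/2:ℝ):ℂ) + ((505/8:ℝ):ℂ)*Complex.I)*U^5)
        = (zi - Bexp U) - (((71/2:ℝ):ℂ) + ((505/8:ℝ):ℂ)*Complex.I)*U^5 := by ring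
    rw [e]
    have h1 := Complex.abs.sub_le_add (zi - Bexp U)
      ((((71/2:ℝ):ℂ) + ((505/8:ℝ):ℂ)*Complex.I)*U^5)
    have h2 : Complex.abs ((((71/2:ℝ):ℂ) + ((505/8:ℝ):ℂ)*Complex.I)*U^5) ≤ 134 * u^5 := by
      rw [map_mul, map_pow, hUabs]
      have hc := coeff_abs_le (71/2) (505/8) (71/2) (505/8) (by norm_num) (by norm_num)
        (by norm_num) (by norm_num)
      have := mul_le_mul_of_nonneg_right hc hu5
      linarith
    linarith
  -- abs values
  set x := Complex.abs z₁ with hx_def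
  set y := Complex.abs zi with hy_def
  rw [Metric.mem_closedBall, Complex.dist_eq, h2M] at hz₁mem hzimem
  have hxr := abs_le.mp ((abs_near' (a := z₁) (b := 1) (map_one Complex.abs)).trans hz₁mem)
  have hyr := abs_le.mp ((abs_near' (a := zi) (b := Complex.I) Complex.abs_I).trans hzimem)
  have hx0 : 0 ≤ x := Complex.abs.nonneg _
  have hy0 : 0 ≤ y := Complex.abs.nonneg _
  have hAr := Are_range hu0.le hu1
  have hAC : ((Are u : ℝ):ℂ) = Aexp U := by rw [hU_def, Acast]
  have hAeq : Complex.abs (Aexp U) = Are u := by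
    rw [← hAC, Complex.abs_ofReal, abs_of_nonneg (by linarith [hAr.1])]
  have hαx : |x - Are u| ≤ 2^28 * u^6 :=
    (abs_near' (a := z₁) (b := Aexp U) hAeq).trans hz1A
  have hx2 : |x^2 - (Are u)^2| ≤ 4*(2^28*u^6) :=
    sq_close hαx hx0 (by linarith [hxr.2]) (by linarith [hAr.1]) (by linarith [hAr.2])
  have hBeq : Complex.abs (Bexp U)^2 = Bre u^2 + Bim u^2 := by
    rw [hU_def, Bcast, Complex.sq_abs, Complex.normSq_add_mul_I]
  set b := Complex.abs (Bexp U) with hb_def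
  have hBnear : |b - 1| ≤ 2*u := by
    refine (abs_near' (a := Bexp U) (b := Complex.I) Complex.abs_I).trans ?_
    have h := Bexp_near hUsmall; rwa [hUabs] at h
  have hBn := abs_le.mp hBnear
  have hb0 : 0 ≤ b := Complex.abs.nonneg _
  have hby : |y - b| ≤ 2^28*u^6 :=
    (abs_near' (a := zi) (b := Bexp U) rfl).trans hziB
  have hy2 : |y^2 - b^2| ≤ 4*(2^28*u^6) :=
    sq_close hby hy0 (by linarith [hyr.2]) hb0 (by linarith [hBn.2])
  have hy2' : |y^2 - (Bre u^2 + Bim u^2)| ≤ 4*(2^28*u^6) := by rw [← hBeq]; exact hy2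
  obtain ⟨hyx, hle⟩ := combine_bounds hu0 hu1 hu40 hx2 hy2' (identS u) hx0 hy0
    (by linarith [hxr.1]) (by linarith [hyr.1])
  refine ⟨z₁, zi, hz₁root, hziroot, hg3, hg4, ?_, ?_⟩
  · rw [abs_of_neg (sub_neg.mpr hyx)]
    linarith
  · rw [abs_of_neg (sub_neg.mpr hyx), h3000]
    linarith
end
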